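/- arXiv:0803.2719 — 5 statements merged into one kernel-verified Lean document; each statement's English description precedes it below -/
import Mathlib

section
/- Let α > 0 be a real number and let ψ be an ultrametric wavelet with ball of radius p^{γ}. Then for every x ∈ ℚ_p the integral ∫ |x − y|_p^{−1−α} (ψ(x) − ψ(y)) dμ(y) converges absolutely and equals p^{−αγ} · (1 − p^{−1−α})/(1 − p^{−α}) · ψ(x). -/
open MeasureTheory

/-- The index (base-`p` logarithm of the radius) of the smallest ball of `ℚ_[p]`
containing the two points `x` and `y` (for `x ≠ y`): its radius is `‖x - y‖ = p ^ (-(x-y).valuation)`. -/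
noncomputable def supIdx {p : ℕ} [Fact p.Prime] (x y : ℚ_[p]) : ℤ := -(x - y).valuation

/-- The index of the smallest ball containing the three points `x`, `ξ`, `η`
(for pairwise distinct points): its radius is `max (‖x-ξ‖, ‖x-η‖, ‖ξ-η‖)`. -/
noncomputable def sup3Idx {p : ℕ} [Fact p.Prime] (x ξ η : ℚ_[p]) : ℤ :=
  max (supIdx x ξ) (max (supIdx x η) (supIdx ξ η))

/-- A ball kernel: a function on balls of `ℚ_[p]`, encoded as a function of a center and
an index (log_p of the radius), independent of the choice of center in the ball. -/
def IsBallKernel {p : ℕ} [Fact p.Prime] (F : ℚ_[p] → ℤ → ℂ) : Prop :=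
  ∀ c c' : ℚ_[p], ∀ γ : ℤ, dist c c' ≤ (p : ℝ) ^ γ → F c γ = F c' γ

/-- Summability of a ball kernel: for every ball `B(c, p^γ₀)`,
`Σ_{γ > γ₀} ‖F(B(c, p^γ))‖ (p^γ - p^(γ-1)) < ∞`. -/
def KernelSummable {p : ℕ} [Fact p.Prime] (F : ℚ_[p] → ℤ → ℂ) : Prop :=
  ∀ c : ℚ_[p], ∀ γ₀ : ℤ, Summable (fun n : ℕ =>
    ‖F c (γ₀ + 1 + n)‖ * ((p : ℝ) ^ (γ₀ + 1 + (n : ℤ)) - (p : ℝ) ^ (γ₀ + (n : ℤ))))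

/-- An ultrametric wavelet with ball `B(c, p^γ)`: vanishes outside the ball, is constant
on each of the `p` maximal subballs (balls of radius `p^(γ-1)`), has zero mean, and is
not identically zero. -/
def IsWavelet {p : ℕ} [Fact p.Prime] [MeasurableSpace ℚ_[p]] (μ : Measure ℚ_[p])
    (ψ : ℚ_[p] → ℂ) (c : ℚ_[p]) (γ : ℤ) : Prop :=
  (∀ x, (p : ℝ) ^ γ < dist x c → ψ x = 0) ∧
    (∀ x y, dist x y ≤ (p : ℝ) ^ (γ - 1) → ψ x = ψ y) ∧
    (∫ x, ψ x ∂μ) = 0 ∧ ψ ≠ 0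

/-- The eigenvalue `λ_I = T(I) ν(I) + Σ_{J > I} T(J) (ν(J) - ν(J,I))` attached to the ball
`I = B(c, p^γI)` and the ball kernel `T`. -/
noncomputable def lamBall {p : ℕ} [Fact p.Prime] (T : ℚ_[p] → ℤ → ℂ) (c : ℚ_[p]) (γI : ℤ) : ℂ :=
  T c γI * (((p : ℝ) ^ γI : ℝ) : ℂ) +
    ∑' n : ℕ, T c (γI + 1 + n) *
      (((p : ℝ) ^ (γI + 1 + (n : ℤ)) - (p : ℝ) ^ (γI + (n : ℤ)) : ℝ) : ℂ)

/-- The coefficient `Φ_{I,J}` for balls `J = B(c, p^γJ) ⊊ I = B(c, p^γI)`. -/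
noncomputable def PhiIJ {p : ℕ} [Fact p.Prime] (F : ℚ_[p] → ℤ → ℂ) (c : ℚ_[p])
    (γI γJ : ℤ) : ℂ :=
  (((p : ℝ) ^ (2 * (γI - 1)) : ℝ) : ℂ) * F c γI - (((p : ℝ) ^ (2 * γJ) : ℝ) : ℂ) * F c γJ -
    ∑ γ ∈ Finset.Ioo γJ γI, (((p : ℝ) ^ (2 * γ) - (p : ℝ) ^ (2 * γ - 2) : ℝ) : ℂ) * F c γ

/-- The (spatial) operator of the quadratic cascade equation:
`∫∫ F(sup(x,ξ,η)) f(ξ)(f(η) - f(x)) dμ(ξ) dμ(η) + ∫ G(sup(x,ξ))(f(x) - f(ξ)) dμ(ξ)`. -/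
noncomputable def cascadeOp {p : ℕ} [Fact p.Prime] [MeasurableSpace ℚ_[p]]
    (μ : Measure ℚ_[p]) (F G : ℚ_[p] → ℤ → ℂ) (f : ℚ_[p] → ℂ) (x : ℚ_[p]) : ℂ :=
  (∫ ξ, ∫ η, F x (sup3Idx x ξ η) * (f ξ * (f η - f x)) ∂μ ∂μ) +
    ∫ ξ, G x (supIdx x ξ) * (f x - f ξ) ∂μ

/-- `v` satisfies the quadratic cascade equation
`∂ₜ v(x,t) + ∫∫ F(sup(x,ξ,η)) v(ξ,t)(v(η,t) - v(x,t)) dμ(ξ) dμ(η)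
  + ∫ G(sup(x,ξ))(v(x,t) - v(ξ,t)) dμ(ξ) = 0` for all `x ∈ ℚ_p` and all `t > 0`. -/
def SatisfiesCascade {p : ℕ} [Fact p.Prime] [MeasurableSpace ℚ_[p]]
    (μ : Measure ℚ_[p]) (F G : ℚ_[p] → ℤ → ℂ) (v : ℚ_[p] → ℝ → ℂ) : Prop :=
  ∀ x : ℚ_[p], ∀ t : ℝ, 0 < t →
    HasDerivAt (fun s => v x s) (-(cascadeOp μ F G (fun y => v y t) x)) t


namespace VladAux

open scoped ENNReal NNReal


variable {p : ℕ} [hp : Fact p.Prime] [MeasurableSpace ℚ_[p]] [BorelSpace ℚ_[p]]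
  (μ : Measure ℚ_[p]) [μ.IsAddHaarMeasure]

lemma meas_ball_translate (x : ℚ_[p]) (r : ℝ) :
    μ (Metric.closedBall x r) = μ (Metric.closedBall 0 r) := by
  have := measure_preimage_add μ x (Metric.closedBall x r)
  rw [← this]
  congr 1
  ext y
  simp [Metric.mem_closedBall, dist_eq_norm]

-- each point of closed unit ball-scaled: covering lemma
lemma cover_ball (γ : ℤ) :
    Metric.closedBall (0:ℚ_[p]) ((p:ℝ)^γ) =
      ⋃ i : Fin p, Metric.closedBall ((i : ℚ_[p]) * (p:ℚ_[p])^(-γ)) ((p:ℝ)^(γ-1)) := by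
  have hp1 : (1:ℝ) < p := by exact_mod_cast hp.out.one_lt
  have hp0 : (0:ℝ) < p := by positivity
  have hnormp : ‖((p:ℚ_[p]))^(-γ)‖ = (p:ℝ)^γ := by
    rw [norm_zpow, Padic.norm_p]
    rw [← zpow_neg_one, ← zpow_mul]
    ring_nf
  ext y
  simp only [Metric.mem_closedBall, dist_eq_norm, Set.mem_iUnion, sub_zero]
  constructor
  · intro hy
    have hu : ‖y * (p:ℚ_[p])^γ‖ ≤ 1 := by
      rw [norm_mul, norm_zpow, Padic.norm_p]
      calc ‖y‖ * ((p:ℝ)⁻¹)^γ ≤ (p:ℝ)^γ * ((p:ℝ)⁻¹)^γ := by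
            apply mul_le_mul_of_nonneg_right hy (by positivity)
        _ = 1 := by rw [← mul_zpow]; simp [mul_inv_cancel₀ (ne_of_gt hp0)]
    set U : ℤ_[p] := ⟨y * (p:ℚ_[p])^γ, hu⟩ with hU
    have hlt : U.appr 1 < p := by simpa using U.appr_lt 1
    refine ⟨⟨U.appr 1, hlt⟩, ?_⟩
    have hspec := U.appr_spec 1
    rw [Ideal.mem_span_singleton] at hspec
    have hnorm : ‖U - (U.appr 1 : ℤ_[p])‖ ≤ (p:ℝ)^(-1:ℤ) := by
      obtain ⟨z, hz⟩ := hspec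
      rw [hz, norm_mul]
      simp only [pow_one, PadicInt.norm_p]
      calc (p:ℝ)⁻¹ * ‖z‖ ≤ (p:ℝ)⁻¹ * 1 := by
            apply mul_le_mul_of_nonneg_left z.norm_le_one (by positivity)
        _ = (p:ℝ)^(-1:ℤ) := by simp
    have hpq : ((p:ℚ_[p]) ≠ 0) := by exact_mod_cast hp.out.ne_zero
    have hpz : (p:ℚ_[p])^γ * (p:ℚ_[p])^(-γ) = 1 := by
      rw [← zpow_add₀ hpq]; simp
    have hUc : (U : ℚ_[p]) = y * (p:ℚ_[p])^γ := rfl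
    have hcast : ((U - (U.appr 1:ℤ_[p]) : ℤ_[p]) : ℚ_[p]) = y * (p:ℚ_[p])^γ - (U.appr 1 : ℚ_[p]) := by
      push_cast [hUc]
      ring
    have key : y - (U.appr 1 : ℚ_[p]) * (p:ℚ_[p])^(-γ) = ((U - (U.appr 1 : ℤ_[p]) : ℤ_[p]) : ℚ_[p]) * (p:ℚ_[p])^(-γ) := by
      rw [hcast, sub_mul, mul_assoc, hpz, mul_one]
    rw [key, norm_mul, hnormp]
    calc ‖((U - (U.appr 1:ℤ_[p]) : ℤ_[p]) : ℚ_[p])‖ * (p:ℝ)^γ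
        ≤ (p:ℝ)^(-1:ℤ) * (p:ℝ)^γ := by
          apply mul_le_mul_of_nonneg_right _ (by positivity)
          rw [PadicInt.padic_norm_e_of_padicInt]
          exact hnorm
      _ = (p:ℝ)^(γ-1) := by rw [← zpow_add₀ (ne_of_gt hp0)]; ring_nf
  · rintro ⟨i, hi⟩
    have h1 : ‖(i:ℚ_[p]) * (p:ℚ_[p])^(-γ)‖ ≤ (p:ℝ)^γ := by
      rw [norm_mul, hnormp]
      have : ‖((i:ℕ) : ℚ_[p])‖ ≤ 1 := by
        have := Padic.norm_int_le_one (p := p) (i : ℤ)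
        push_cast at this
        exact this
      calc ‖((i:ℕ):ℚ_[p])‖ * (p:ℝ)^γ ≤ 1 * (p:ℝ)^γ :=
            mul_le_mul_of_nonneg_right this (by positivity)
        _ = (p:ℝ)^γ := one_mul _
    calc ‖y‖ = ‖(y - (i:ℚ_[p]) * (p:ℚ_[p])^(-γ)) + (i:ℚ_[p]) * (p:ℚ_[p])^(-γ)‖ := by ring_nf
      _ ≤ max ‖y - (i:ℚ_[p]) * (p:ℚ_[p])^(-γ)‖ ‖(i:ℚ_[p]) * (p:ℚ_[p])^(-γ)‖ :=
          Padic.nonarchimedean _ _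
      _ ≤ (p:ℝ)^γ := max_le (le_trans hi (zpow_le_zpow_right₀ (le_of_lt hp1) (by omega))) h1

lemma disjoint_cosets (γ : ℤ) : Pairwise (Function.onFun Disjoint
    (fun i : Fin p => Metric.closedBall ((i : ℚ_[p]) * (p:ℚ_[p])^(-γ)) ((p:ℝ)^(γ-1)))) := by
  have hp1 : (1:ℝ) < p := by exact_mod_cast hp.out.one_lt
  intro i j hij
  rw [Function.onFun, Set.disjoint_left]
  intro y hyi hyj
  simp only [Metric.mem_closedBall, dist_eq_norm] at hyi hyj
  have hnormp : ‖((p:ℚ_[p]))^(-γ)‖ = (p:ℝ)^γ := by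
    rw [norm_zpow, Padic.norm_p, ← zpow_neg_one, ← zpow_mul]; ring_nf
  have hdiff : ‖((i:ℚ_[p]) - (j:ℚ_[p])) * (p:ℚ_[p])^(-γ)‖ ≤ (p:ℝ)^(γ-1) := by
    have : (i:ℚ_[p]) * (p:ℚ_[p])^(-γ) - (j:ℚ_[p]) * (p:ℚ_[p])^(-γ) =
        ((i:ℚ_[p]) * (p:ℚ_[p])^(-γ) - y) + (y - (j:ℚ_[p]) * (p:ℚ_[p])^(-γ)) := by ring
    rw [sub_mul, this]
    calc ‖_ + _‖ ≤ max ‖(i:ℚ_[p]) * (p:ℚ_[p])^(-γ) - y‖ ‖y - (j:ℚ_[p]) * (p:ℚ_[p])^(-γ)‖ :=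
          Padic.nonarchimedean _ _
      _ ≤ (p:ℝ)^(γ-1) := by
          apply max_le _ hyj
          rw [← norm_neg]; simpa using hyi
  rw [norm_mul, hnormp] at hdiff
  have hlt1 : ‖(i:ℚ_[p]) - (j:ℚ_[p])‖ < 1 := by
    have hpos : (0:ℝ) < (p:ℝ)^γ := by positivity
    have h2 : ‖(i:ℚ_[p]) - (j:ℚ_[p])‖ ≤ (p:ℝ)^(γ-1) / (p:ℝ)^γ := by
      rw [le_div_iff₀ hpos]; exact hdiff
    have h3 : (p:ℝ)^(γ-1) / (p:ℝ)^γ = (p:ℝ)⁻¹ := by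
      rw [div_eq_iff (ne_of_gt hpos), ← zpow_neg_one, ← zpow_add₀ (by positivity : (p:ℝ) ≠ 0)]
      ring_nf
    rw [h3] at h2
    exact lt_of_le_of_lt h2 (by rw [inv_lt_one_iff₀]; right; exact hp1)
  have hcast : (i:ℚ_[p]) - (j:ℚ_[p]) = (((i:ℤ) - (j:ℤ) : ℤ) : ℚ_[p]) := by push_cast; ring
  rw [hcast, ← PadicInt.norm_intCast_eq_padic_norm, PadicInt.norm_int_lt_one_iff_dvd] at hlt1
  have : ((i:ℤ) - (j:ℤ)) = 0 := by
    apply Int.eq_zero_of_abs_lt_dvd hlt1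
    have hi := i.isLt; have hj := j.isLt
    rw [abs_lt]
    omega
  exact hij (Fin.ext (by omega))

lemma measure_ball_step (γ : ℤ) :
    μ (Metric.closedBall (0:ℚ_[p]) ((p:ℝ)^γ)) = p * μ (Metric.closedBall (0:ℚ_[p]) ((p:ℝ)^(γ-1))) := by
  rw [cover_ball (p := p) γ]
  rw [measure_iUnion (disjoint_cosets γ) (fun i => measurableSet_closedBall)]
  simp only [meas_ball_translate μ]
  simp [tsum_fintype, Finset.sum_const, Finset.card_univ]

lemma measure_ball_zero (hμ : μ (Metric.closedBall 0 1) = 1) (γ : ℤ) :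
    μ (Metric.closedBall (0:ℚ_[p]) ((p:ℝ)^γ)) = ENNReal.ofReal ((p:ℝ)^γ) := by
  have hp1 : (1:ℝ) < p := by exact_mod_cast hp.out.one_lt
  have hpe0 : (p : ℝ≥0∞) ≠ 0 := by exact_mod_cast hp.out.ne_zero
  have hpet : (p : ℝ≥0∞) ≠ ⊤ := ENNReal.natCast_ne_top p
  have key : ∀ γ : ℤ, μ (Metric.closedBall (0:ℚ_[p]) ((p:ℝ)^γ)) = (p : ℝ≥0∞)^γ := by
    intro γ
    induction γ using Int.induction_on with
    | zero => simpa using hμ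
    | succ n ih =>
        have := measure_ball_step (p := p) μ ((n:ℤ)+1)
        simp only [add_sub_cancel_right] at this
        rw [this, ih, ENNReal.zpow_add hpe0 hpet, zpow_one, mul_comm]
    | pred n ih =>
        have hstep := measure_ball_step (p := p) μ (-(n:ℤ))
        rw [ih] at hstep
        have h2 : (p:ℝ≥0∞)^(-(n:ℤ)) = (p:ℝ≥0∞)^(1:ℤ) * (p:ℝ≥0∞)^(-(n:ℤ)-1) := by
          rw [← ENNReal.zpow_add hpe0 hpet]
          norm_num
        rw [h2, zpow_one] at hstep
        have h3 := (ENNReal.mul_right_inj hpe0 hpet).mp hstep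
        exact h3.symm
  rw [key γ]
  have hc : ((p:ℝ≥0) : ℝ≥0∞) = (p:ℝ≥0∞) := by norm_cast
  rw [← hc, ← ENNReal.coe_zpow (by exact_mod_cast hp.out.ne_zero)]
  rw [ENNReal.ofReal]
  congr 1
  ext
  rw [Real.coe_toNNReal _ (by positivity), NNReal.coe_zpow]
  norm_num

lemma measure_ball_any (hμ : μ (Metric.closedBall 0 1) = 1) (x : ℚ_[p]) (γ : ℤ) :
    μ (Metric.closedBall x ((p:ℝ)^γ)) = ENNReal.ofReal ((p:ℝ)^γ) := by
  rw [meas_ball_translate, measure_ball_zero μ hμ]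

/-- the annulus (sphere) -/
def Ann (x : ℚ_[p]) (m : ℤ) : Set ℚ_[p] :=
  Metric.closedBall x ((p:ℝ)^m) \ Metric.closedBall x ((p:ℝ)^(m-1))

omit [MeasurableSpace ℚ_[p]] [BorelSpace ℚ_[p]] in
lemma mem_Ann_iff {x : ℚ_[p]} {m : ℤ} {y : ℚ_[p]} :
    y ∈ Ann x m ↔ ‖y - x‖ = (p:ℝ)^m := by
  have hp1 : (1:ℝ) < p := by exact_mod_cast hp.out.one_lt
  simp only [Ann, Set.mem_diff, Metric.mem_closedBall, not_le, dist_eq_norm]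
  constructor
  · rintro ⟨h1, h2⟩
    have hne : y - x ≠ 0 := by
      intro h
      rw [h, norm_zero] at h2
      exact absurd h2 (not_lt.mpr (by positivity))
    rw [Padic.norm_eq_zpow_neg_valuation hne] at h1 h2 ⊢
    congr 1
    have hlt := (zpow_lt_zpow_iff_right₀ hp1).mp h2
    have hle := (zpow_le_zpow_iff_right₀ hp1).mp h1
    omega
  · intro h
    refine ⟨le_of_eq h, ?_⟩
    rw [h]
    exact (zpow_lt_zpow_iff_right₀ hp1).mpr (by omega)

lemma measure_Ann (hμ : μ (Metric.closedBall 0 1) = 1) (x : ℚ_[p]) (m : ℤ) :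
    μ (Ann x m) = ENNReal.ofReal ((p:ℝ)^m - (p:ℝ)^(m-1)) := by
  have hp1 : (1:ℝ) < p := by exact_mod_cast hp.out.one_lt
  rw [Ann, measure_diff (Metric.closedBall_subset_closedBall
      (zpow_le_zpow_right₀ (le_of_lt hp1) (by omega)))
      measurableSet_closedBall.nullMeasurableSet
      (by rw [measure_ball_any μ hμ]; exact ENNReal.ofReal_ne_top),
    measure_ball_any μ hμ, measure_ball_any μ hμ,
    ← ENNReal.ofReal_sub _ (by positivity)]

lemma measure_Ann_toReal (hμ : μ (Metric.closedBall 0 1) = 1) (x : ℚ_[p]) (m : ℤ) :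
    (μ (Ann x m)).toReal = (p:ℝ)^m - (p:ℝ)^(m-1) := by
  have hp1 : (1:ℝ) < p := by exact_mod_cast hp.out.one_lt
  rw [measure_Ann μ hμ, ENNReal.toReal_ofReal]
  have : (p:ℝ)^(m-1) ≤ (p:ℝ)^m := zpow_le_zpow_right₀ (le_of_lt hp1) (by omega)
  linarith

omit μ in
lemma Ann_measurableSet (x : ℚ_[p]) (m : ℤ) : MeasurableSet (Ann x m) :=
  measurableSet_closedBall.diff measurableSet_closedBall

omit [MeasurableSpace ℚ_[p]] [BorelSpace ℚ_[p]] in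
lemma compl_ball_eq_iUnion (x : ℚ_[p]) (m : ℤ) :
    (Metric.closedBall x ((p:ℝ)^(m-1)))ᶜ = ⋃ n : ℕ, Ann x (m + n) := by
  have hp1 : (1:ℝ) < p := by exact_mod_cast hp.out.one_lt
  ext y
  simp only [Set.mem_compl_iff, Metric.mem_closedBall, not_le, dist_eq_norm, Set.mem_iUnion,
    mem_Ann_iff]
  constructor
  · intro h
    have hne : y - x ≠ 0 := by
      intro h0; rw [h0, norm_zero] at h; exact absurd h (not_lt.mpr (by positivity))
    rw [Padic.norm_eq_zpow_neg_valuation hne] at h ⊢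
    have hge : m ≤ -(y-x).valuation := by
      have := (zpow_lt_zpow_iff_right₀ hp1).mp h
      omega
    refine ⟨(-(y-x).valuation - m).toNat, ?_⟩
    congr 1
    omega
  · rintro ⟨n, hn⟩
    rw [hn]
    exact (zpow_lt_zpow_iff_right₀ hp1).mpr (by omega)

lemma tail_integral (hμ : μ (Metric.closedBall 0 1) = 1) (x : ℚ_[p]) (α : ℝ) (hα : 0 < α)
    (m : ℤ) :
    IntegrableOn (fun y => ((‖x - y‖ ^ (-(1 + α)) : ℝ) : ℂ))
        (Metric.closedBall x ((p:ℝ)^(m-1)))ᶜ μ ∧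
    ∫ y in (Metric.closedBall x ((p:ℝ)^(m-1)))ᶜ, ((‖x - y‖ ^ (-(1 + α)) : ℝ) : ℂ) ∂μ =
      (((1 - (p:ℝ)⁻¹) * (p:ℝ) ^ (-((m:ℝ) * α)) / (1 - (p:ℝ) ^ (-α)) : ℝ) : ℂ) := by
  have hp1 : (1:ℝ) < p := by exact_mod_cast hp.out.one_lt
  have hp0 : (0:ℝ) < p := by positivity
  set K : ℚ_[p] → ℂ := fun y => ((‖x - y‖ ^ (-(1 + α)) : ℝ) : ℂ) with hK
  -- constant value on each annulus
  have hconst : ∀ k : ℤ, ∀ y ∈ Ann x k, K y = ((((p:ℝ)^k) ^ (-(1+α)) : ℝ) : ℂ) := by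
    intro k y hy
    rw [mem_Ann_iff] at hy
    have h2 : ‖x - y‖ = (p:ℝ)^k := by rw [norm_sub_rev]; exact hy
    simp [hK, h2]
  -- integral of K over each annulus
  have hint : ∀ k : ℤ, IntegrableOn K (Ann x k) μ := by
    intro k
    apply (integrableOn_const (lt_top_iff_ne_top.mp ?_)).congr_fun (fun y hy => (hconst k y hy).symm)
      (Ann_measurableSet x k)
    rw [measure_Ann μ hμ]
    exact ENNReal.ofReal_lt_top
  have hval : ∀ k : ℤ, ∫ y in Ann x k, K y ∂μ =
      ((((p:ℝ)^k) ^ (-(1+α)) * ((p:ℝ)^k - (p:ℝ)^(k-1)) : ℝ) : ℂ) := by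
    intro k
    rw [setIntegral_congr_fun (Ann_measurableSet x k) (hconst k), setIntegral_const,
      Measure.real, measure_Ann_toReal μ hμ]
    rw [← Complex.coe_smul, smul_eq_mul]
    push_cast
    ring
  -- the value as rpow
  have hterm : ∀ k : ℤ, ((p:ℝ)^k) ^ (-(1+α)) * ((p:ℝ)^k - (p:ℝ)^(k-1)) =
      (1 - (p:ℝ)⁻¹) * (p:ℝ) ^ (-((k:ℝ) * α)) := by
    intro k
    have h1 : ((p:ℝ)^k : ℝ) = (p:ℝ) ^ (k:ℝ) := (Real.rpow_intCast _ k).symm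
    have h2 : ((p:ℝ)^(k-1) : ℝ) = (p:ℝ) ^ ((k:ℝ) - 1) := by
      rw [← Real.rpow_intCast (p:ℝ) (k-1)]
      norm_num
    rw [h1, h2]
    rw [← Real.rpow_mul (le_of_lt hp0)]
    have e1 : (p:ℝ)^((k:ℝ)*(-(1+α))) * (p:ℝ)^(k:ℝ) = (p:ℝ)^(-((k:ℝ)*α)) := by
      rw [← Real.rpow_add hp0]
      congr 1
      ring
    have e2 : (p:ℝ)^((k:ℝ)*(-(1+α))) * (p:ℝ)^((k:ℝ)-1) = (p:ℝ)^(-((k:ℝ)*α)) * (p:ℝ)⁻¹ := by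
      rw [← Real.rpow_add hp0,
        show (k:ℝ)*(-(1+α))+((k:ℝ)-1) = -((k:ℝ)*α) + (-1) by ring,
        Real.rpow_add hp0, Real.rpow_neg_one]
    rw [mul_sub, e1, e2]
    ring
  -- geometric structure
  set r : ℝ := (p:ℝ) ^ (-α) with hr
  have hr0 : 0 ≤ r := Real.rpow_nonneg (le_of_lt hp0) _
  have hr1 : r < 1 := Real.rpow_lt_one_of_one_lt_of_neg hp1 (by linarith)
  have hexp : ∀ n : ℕ, (p:ℝ) ^ (-((((m + n : ℤ)):ℝ) * α)) = (p:ℝ) ^ (-((m:ℝ)*α)) * r ^ n := by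
    intro n
    rw [hr, ← Real.rpow_natCast ((p:ℝ) ^ (-α)) n, ← Real.rpow_mul (le_of_lt hp0),
      ← Real.rpow_add hp0]
    congr 1
    push_cast
    ring
  have hsummable : Summable (fun n : ℕ =>
      (1 - (p:ℝ)⁻¹) * ((p:ℝ) ^ (-((m:ℝ)*α)) * r ^ n)) :=
    ((summable_geometric_of_lt_one hr0 hr1).mul_left _).mul_left _
  have hdisj : Pairwise (Function.onFun Disjoint (fun n : ℕ => Ann x (m + n))) := by
    intro n1 n2 hne
    rw [Function.onFun, Set.disjoint_left]
    intro y hy1 hy2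
    rw [mem_Ann_iff] at hy1 hy2
    have := hy1.symm.trans hy2
    have h2 := zpow_right_injective₀ hp0 (ne_of_gt hp1) this
    omega
  have hnormK : ∀ k : ℤ, ∀ y ∈ Ann x k, ‖K y‖ = ((p:ℝ)^k) ^ (-(1+α)) := by
    intro k y hy
    rw [hconst k y hy, Complex.norm_real, Real.norm_eq_abs, abs_of_nonneg]
    exact Real.rpow_nonneg (by positivity) _
  have hnormval : ∀ k : ℤ, ∫ y in Ann x k, ‖K y‖ ∂μ =
      ((p:ℝ)^k) ^ (-(1+α)) * ((p:ℝ)^k - (p:ℝ)^(k-1)) := by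
    intro k
    rw [setIntegral_congr_fun (Ann_measurableSet x k) (hnormK k), setIntegral_const,
      Measure.real, measure_Ann_toReal μ hμ, smul_eq_mul]
    ring
  have hsum_int : Summable (fun n : ℕ => ∫ y in Ann x (m + n), ‖K y‖ ∂μ) := by
    apply hsummable.congr
    intro n
    rw [hnormval, hterm, hexp]
  rw [compl_ball_eq_iUnion]
  have hintOn : IntegrableOn K (⋃ n : ℕ, Ann x (m + n)) μ :=
    integrableOn_iUnion_of_summable_integral_norm
      (fun n => hint _) hsum_int
  refine ⟨hintOn, ?_⟩
  rw [integral_iUnion (fun n => Ann_measurableSet x _) hdisj hintOn]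
  have hvals : ∀ n : ℕ, ∫ y in Ann x (m + n), K y ∂μ =
      (((1 - (p:ℝ)⁻¹) * ((p:ℝ) ^ (-((m:ℝ)*α)) * r ^ n) : ℝ) : ℂ) := by
    intro n
    rw [hval]
    congr 1
    rw [hterm, hexp]
  calc ∑' n : ℕ, ∫ y in Ann x (m + n), K y ∂μ
      = ∑' n : ℕ, (((1 - (p:ℝ)⁻¹) * ((p:ℝ) ^ (-((m:ℝ)*α)) * r ^ n) : ℝ) : ℂ) :=
        tsum_congr hvals
    _ = ((∑' n : ℕ, (1 - (p:ℝ)⁻¹) * ((p:ℝ) ^ (-((m:ℝ)*α)) * r ^ n) : ℝ) : ℂ) := by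
        rw [Complex.ofReal_tsum]
    _ = (((1 - (p:ℝ)⁻¹) * (p:ℝ) ^ (-((m:ℝ) * α)) / (1 - (p:ℝ) ^ (-α)) : ℝ) : ℂ) := by
        congr 1
        rw [tsum_mul_left, tsum_mul_left, tsum_geometric_of_lt_one hr0 hr1]
        rw [hr]
        field_simp

omit [MeasurableSpace ℚ_[p]] [BorelSpace ℚ_[p]] in
lemma closedBall_eq_of_dist_le {x c : ℚ_[p]} {r : ℝ} (h : dist x c ≤ r) :
    Metric.closedBall x r = Metric.closedBall c r := by
  have key : ∀ a b : ℚ_[p], dist a b ≤ r → Metric.closedBall a r ⊆ Metric.closedBall b r := by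
    intro a b hab y hy
    simp only [Metric.mem_closedBall, dist_eq_norm] at *
    calc ‖y - b‖ = ‖(y - a) + (a - b)‖ := by ring_nf
      _ ≤ max ‖y - a‖ ‖a - b‖ := Padic.nonarchimedean _ _
      _ ≤ r := max_le hy hab
  exact le_antisymm (key x c h) (key c x (dist_comm x c ▸ h))

omit [MeasurableSpace ℚ_[p]] [BorelSpace ℚ_[p]] in
lemma wavelet_continuous {ψ : ℚ_[p] → ℂ} {γ : ℤ}
    (h2 : ∀ x y : ℚ_[p], dist x y ≤ (p:ℝ)^(γ-1) → ψ x = ψ y) : Continuous ψ := by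
  have hp0 : (0:ℝ) < p := by exact_mod_cast hp.out.pos
  rw [continuous_iff_continuousAt]
  intro x
  have hev : ψ =ᶠ[nhds x] fun _ => ψ x := by
    filter_upwards [Metric.closedBall_mem_nhds x (by positivity : (0:ℝ) < (p:ℝ)^(γ-1))] with y hy
    exact (h2 x y (by rw [dist_comm]; exact hy)).symm
  exact continuousAt_const.congr hev.symm

lemma wavelet_integrable {ψ : ℚ_[p] → ℂ} {c : ℚ_[p]} {γ : ℤ}
    (h1 : ∀ x, (p:ℝ)^γ < dist x c → ψ x = 0)
    (h2 : ∀ x y : ℚ_[p], dist x y ≤ (p:ℝ)^(γ-1) → ψ x = ψ y) : Integrable ψ μ := by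
  apply Continuous.integrable_of_hasCompactSupport (wavelet_continuous h2)
  apply HasCompactSupport.intro (isCompact_closedBall c ((p:ℝ)^γ))
  intro y hy
  exact h1 y (by simpa [Metric.mem_closedBall, not_le] using hy)

theorem main (hμ : μ (Metric.closedBall 0 1) = 1)
    (α : ℝ) (hα : 0 < α)
    (ψ : ℚ_[p] → ℂ) (c : ℚ_[p]) (γ : ℤ)
    (h1 : ∀ x, (p:ℝ)^γ < dist x c → ψ x = 0)
    (h2 : ∀ x y : ℚ_[p], dist x y ≤ (p:ℝ)^(γ-1) → ψ x = ψ y)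
    (h3 : (∫ x, ψ x ∂μ) = 0) :
    ∀ x : ℚ_[p],
      Integrable (fun y => ((‖x - y‖ ^ (-(1 + α)) : ℝ) : ℂ) * (ψ x - ψ y)) μ ∧
      (∫ y, ((‖x - y‖ ^ (-(1 + α)) : ℝ) : ℂ) * (ψ x - ψ y) ∂μ) =
        ((((p : ℝ) ^ (-(α * (γ : ℝ))) * ((1 - (p : ℝ) ^ (-(1 + α))) / (1 - (p : ℝ) ^ (-α))) : ℝ)) : ℂ) * ψ x := by
  intro x
  have hp1 : (1:ℝ) < p := by exact_mod_cast hp.out.one_lt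
  have hp0 : (0:ℝ) < p := by positivity
  have hψint : Integrable ψ μ := wavelet_integrable μ h1 h2
  set K : ℚ_[p] → ℂ := fun y => ((‖x - y‖ ^ (-(1 + α)) : ℝ) : ℂ) with hK
  set g : ℚ_[p] → ℂ := fun y => K y * (ψ x - ψ y) with hg
  by_cases hxc : dist x c ≤ (p:ℝ)^γ
  · -- x inside the ball
    set A : Set ℚ_[p] := Metric.closedBall x ((p:ℝ)^γ) with hA
    set A' : Set ℚ_[p] := Metric.closedBall x ((p:ℝ)^(γ-1)) with hA'
    have hAc : A = Metric.closedBall c ((p:ℝ)^γ) := closedBall_eq_of_dist_le hxc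
    have hsub : A' ⊆ A :=
      Metric.closedBall_subset_closedBall (zpow_le_zpow_right₀ (le_of_lt hp1) (by omega))
    have hAnn : A \ A' = Ann x γ := rfl
    -- g vanishes on A'
    have hgA' : ∀ y ∈ A', g y = 0 := by
      intro y hy
      rw [hA', Metric.mem_closedBall] at hy
      have : ψ x = ψ y := h2 x y (by rw [dist_comm]; exact hy)
      simp [hg, this]
    -- ψ vanishes outside A
    have hψAc : ∀ y ∈ Aᶜ, ψ y = 0 := by
      intro y hy
      apply h1
      simp only [hA, Set.mem_compl_iff, Metric.mem_closedBall, not_le] at hy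
      have hne : ‖y - x‖ ≠ ‖x - c‖ := by
        rw [dist_eq_norm] at hy hxc
        intro h; rw [h] at hy; exact absurd (lt_of_lt_of_le hy hxc) (lt_irrefl _)
      have : ‖y - c‖ = max ‖y - x‖ ‖x - c‖ := by
        rw [show y - c = (y - x) + (x - c) by ring]
        exact Padic.add_eq_max_of_ne hne
      rw [dist_eq_norm, this]
      rw [dist_eq_norm] at hy
      exact lt_max_of_lt_left hy
    -- K constant on Ann x γ
    have hKconst : ∀ y ∈ Ann x γ, K y = ((((p:ℝ)^γ) ^ (-(1+α)) : ℝ) : ℂ) := by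
      intro y hy
      rw [mem_Ann_iff] at hy
      have h2' : ‖x - y‖ = (p:ℝ)^γ := by rw [norm_sub_rev]; exact hy
      simp [hK, h2']
    -- integrability pieces
    have hgAnn_int : IntegrableOn g (Ann x γ) μ := by
      have hfin : μ (Ann x γ) < ⊤ := by
        rw [measure_Ann μ hμ]; exact ENNReal.ofReal_lt_top
      have : IntegrableOn (fun y => ((((p:ℝ)^γ) ^ (-(1+α)) : ℝ) : ℂ) * (ψ x - ψ y)) (Ann x γ) μ :=
        ((integrableOn_const hfin.ne).sub hψint.integrableOn).const_mul _
      apply this.congr_fun ?_ (Ann_measurableSet x γ)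
      intro y hy
      rw [hg]
      simp only
      rw [hKconst y hy]
    have hgA'_int : IntegrableOn g A' μ := by
      apply (integrableOn_zero (s := A') (μ := μ)).congr_fun (fun y hy => (hgA' y hy).symm)
        measurableSet_closedBall
    have htail := tail_integral μ hμ x α hα (γ+1)
    have hAcompl : Aᶜ = (Metric.closedBall x ((p:ℝ)^((γ+1)-1)))ᶜ := by
      rw [hA]; norm_num
    have hgAc_int : IntegrableOn g Aᶜ μ := by
      have hint : IntegrableOn (fun y => ψ x * K y) Aᶜ μ := by
        rw [hAcompl]; exact htail.1.const_mul _
      apply hint.congr_fun ?_ measurableSet_closedBall.compl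
      intro y hy
      rw [hg]
      simp only
      rw [hψAc y hy, sub_zero, mul_comm]
    have hgA_int : IntegrableOn g A μ := by
      have := hgA'_int.union (hAnn ▸ hgAnn_int)
      rwa [Set.union_diff_cancel hsub] at this
    have hgint : Integrable g μ := by
      have := hgA_int.union hgAc_int
      rwa [Set.union_compl_self, integrableOn_univ] at this
    refine ⟨hgint, ?_⟩
    -- now the integral value
    have hsplit : ∫ y, g y ∂μ = (∫ y in A, g y ∂μ) + ∫ y in Aᶜ, g y ∂μ :=
      (integral_add_compl measurableSet_closedBall hgint).symm
    have hsplitA : ∫ y in A, g y ∂μ = (∫ y in A', g y ∂μ) + ∫ y in Ann x γ, g y ∂μ := by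
      rw [← Set.union_diff_cancel hsub, setIntegral_union
        Set.disjoint_sdiff_right (measurableSet_closedBall.diff measurableSet_closedBall)
        hgA'_int (hAnn ▸ hgAnn_int)]
      rfl
    have hintA' : ∫ y in A', g y ∂μ = 0 :=
      setIntegral_eq_zero_of_forall_eq_zero hgA'
    -- integral of ψ over A'
    have hψA' : ∫ y in A', ψ y ∂μ = (((p:ℝ)^(γ-1) : ℝ) : ℂ) * ψ x := by
      have : ∀ y ∈ A', ψ y = ψ x := by
        intro y hy
        rw [hA', Metric.mem_closedBall] at hy
        exact (h2 x y (by rw [dist_comm]; exact hy)).symm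
      rw [setIntegral_congr_fun measurableSet_closedBall this, setIntegral_const,
        Measure.real, measure_ball_any μ hμ, ENNReal.toReal_ofReal (by positivity)]
      rw [← Complex.coe_smul, smul_eq_mul]
    -- integral of ψ over Ann x γ
    have hψAc_zero : ∫ y in Aᶜ, ψ y ∂μ = 0 := setIntegral_eq_zero_of_forall_eq_zero hψAc
    have hψA : ∫ y in A, ψ y ∂μ = (((p:ℝ)^(γ-1) : ℝ) : ℂ) * ψ x + ∫ y in Ann x γ, ψ y ∂μ := by
      rw [← Set.union_diff_cancel hsub, setIntegral_union
        Set.disjoint_sdiff_right (measurableSet_closedBall.diff measurableSet_closedBall)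
        hψint.integrableOn hψint.integrableOn]
      rw [show (Metric.closedBall x ((p:ℝ)^(γ-1)) : Set ℚ_[p]) = A' from rfl,
        show (Metric.closedBall x ((p:ℝ)^γ) \ Metric.closedBall x ((p:ℝ)^(γ-1)) : Set ℚ_[p]) = Ann x γ from rfl,
        hψA']
    have hψAnn : ∫ y in Ann x γ, ψ y ∂μ = -((((p:ℝ)^(γ-1) : ℝ) : ℂ) * ψ x) := by
      have htot : (∫ y in A, ψ y ∂μ) + ∫ y in Aᶜ, ψ y ∂μ = 0 := by
        rw [integral_add_compl measurableSet_closedBall hψint, h3]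
      rw [hψAc_zero, add_zero, hψA] at htot
      linear_combination htot
    -- integral of g over Ann x γ
    have hgAnn : ∫ y in Ann x γ, g y ∂μ =
        ((((p:ℝ)^γ) ^ (-(1+α)) * (p:ℝ)^γ : ℝ) : ℂ) * ψ x := by
      have heq : ∀ y ∈ Ann x γ, g y = ((((p:ℝ)^γ) ^ (-(1+α)) : ℝ) : ℂ) * (ψ x - ψ y) := by
        intro y hy
        rw [hg]; simp only; rw [hKconst y hy]
      rw [setIntegral_congr_fun (Ann_measurableSet x γ) heq, integral_const_mul]
      rw [integral_sub (IntegrableOn.integrable <| integrableOn_const (lt_top_iff_ne_top.mp (by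
            rw [measure_Ann μ hμ]; exact ENNReal.ofReal_lt_top))) hψint.integrableOn]
      rw [hψAnn, setIntegral_const, Measure.real, measure_Ann_toReal μ hμ]
      rw [← Complex.coe_smul, smul_eq_mul]
      push_cast
      ring
    -- integral of g over Aᶜ
    have hgAc : ∫ y in Aᶜ, g y ∂μ =
        ψ x * (((1 - (p:ℝ)⁻¹) * (p:ℝ) ^ (-((((γ+1):ℤ):ℝ) * α)) / (1 - (p:ℝ) ^ (-α)) : ℝ) : ℂ) := by
      have heq : ∀ y ∈ Aᶜ, g y = ψ x * K y := by
        intro y hy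
        rw [hg]; simp only; rw [hψAc y hy, sub_zero, mul_comm]
      rw [setIntegral_congr_fun measurableSet_closedBall.compl heq, integral_const_mul,
        hAcompl, htail.2]
    show (∫ y, g y ∂μ) = _
    rw [hsplit, hsplitA, hintA', hgAnn, hgAc, zero_add]
    -- final algebra
    have hrne : (1:ℝ) - (p:ℝ) ^ (-α) ≠ 0 := by
      have : (p:ℝ) ^ (-α) < 1 := Real.rpow_lt_one_of_one_lt_of_neg hp1 (by linarith)
      linarith
    have key : ((p:ℝ)^γ) ^ (-(1+α)) * (p:ℝ)^γ +
        (1 - (p:ℝ)⁻¹) * (p:ℝ) ^ (-((((γ+1):ℤ):ℝ) * α)) / (1 - (p:ℝ) ^ (-α)) =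
        (p:ℝ) ^ (-(α * (γ:ℝ))) * ((1 - (p:ℝ) ^ (-(1 + α))) / (1 - (p:ℝ) ^ (-α))) := by
      have e0 : ((p:ℝ)^γ : ℝ) = (p:ℝ) ^ (γ:ℝ) := (Real.rpow_intCast _ γ).symm
      have e1 : ((p:ℝ)^γ) ^ (-(1+α)) * (p:ℝ)^γ = (p:ℝ) ^ (-(α * (γ:ℝ))) := by
        rw [e0, ← Real.rpow_mul (le_of_lt hp0), ← Real.rpow_add hp0]
        congr 1
        ring
      have e2 : (p:ℝ) ^ (-((((γ+1):ℤ):ℝ) * α)) = (p:ℝ) ^ (-(α * (γ:ℝ))) * (p:ℝ) ^ (-α) := by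
        rw [← Real.rpow_add hp0]
        congr 1
        push_cast
        ring
      have e3 : (p:ℝ) ^ (-(1+α)) = (p:ℝ)⁻¹ * (p:ℝ) ^ (-α) := by
        rw [show -(1+α) = (-1) + (-α) by ring, Real.rpow_add hp0, Real.rpow_neg_one]
      rw [e1, e2, e3]
      field_simp
      ring
    rw [← key]
    push_cast
    ring
  · -- x outside the ball
    push_neg at hxc
    have hψx : ψ x = 0 := h1 x hxc
    set c0 : ℝ := ‖x - c‖ ^ (-(1+α)) with hc0
    have hgy : ∀ y, g y = -((c0:ℝ):ℂ) * ψ y := by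
      intro y
      by_cases hy : ψ y = 0
      · simp [hg, hy, hψx]
      · have hyc : dist y c ≤ (p:ℝ)^γ := by
          by_contra hcon
          push_neg at hcon
          exact hy (h1 y hcon)
        have hlt : ‖c - y‖ < ‖x - c‖ := by
          rw [dist_eq_norm] at hxc hyc
          calc ‖c - y‖ = ‖y - c‖ := by rw [norm_sub_rev]
            _ ≤ (p:ℝ)^γ := hyc
            _ < ‖x - c‖ := hxc
        have hxy : ‖x - y‖ = ‖x - c‖ := by
          rw [show x - y = (x - c) + (c - y) by ring,
            Padic.add_eq_max_of_ne hlt.ne', max_eq_left hlt.le]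
        simp only [hg, hK, hψx, hxy, zero_sub, hc0]
        push_cast
        ring
    have hgint : Integrable g μ := by
      rw [show g = fun y => -((c0:ℝ):ℂ) * ψ y from funext hgy]
      exact hψint.const_mul _
    refine ⟨hgint, ?_⟩
    have hval : (∫ y, g y ∂μ) = 0 := by
      rw [show g = fun y => -((c0:ℝ):ℂ) * ψ y from funext hgy, integral_const_mul, h3, mul_zero]
    show (∫ y, g y ∂μ) = _
    rw [hval, hψx, mul_zero]


end VladAux

/-- the Vladimirov operator `D^α` on wavelets: for `α > 0` and a wavelet `ψ`
with ball of radius `p^γ`, `∫ |x-y|_p^(-1-α) (ψ(x) - ψ(y)) dμ(y)` converges absolutely and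
equals `p^(-αγ) (1 - p^(-1-α))/(1 - p^(-α)) ψ(x)`. -/
theorem vladimirov_eigenvalue {p : ℕ} [Fact p.Prime]
    [MeasurableSpace ℚ_[p]] [BorelSpace ℚ_[p]]
    (μ : Measure ℚ_[p]) [μ.IsAddHaarMeasure] (hμ : μ (Metric.closedBall 0 1) = 1)
    (α : ℝ) (hα : 0 < α)
    (ψ : ℚ_[p] → ℂ) (c : ℚ_[p]) (γ : ℤ) (hψ : IsWavelet μ ψ c γ) :
    ∀ x : ℚ_[p],
      Integrable (fun y => ((‖x - y‖ ^ (-(1 + α)) : ℝ) : ℂ) * (ψ x - ψ y)) μ ∧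
      (∫ y, ((‖x - y‖ ^ (-(1 + α)) : ℝ) : ℂ) * (ψ x - ψ y) ∂μ) =
        ((((p : ℝ) ^ (-(α * (γ : ℝ))) * ((1 - (p : ℝ) ^ (-(1 + α))) / (1 - (p : ℝ) ^ (-α))) : ℝ)) : ℂ) * ψ x := by
  obtain ⟨hw1, hw2, hw3, -⟩ := hψ
  exact VladAux.main μ hμ α hα ψ c γ hw1 hw2 hw3
end

section
/- If ψ and φ are ultrametric wavelets whose balls are distinct, then ψ and φ are orthogonal in L²(ℚ_p, μ): ∫ ψ(x) · conj(φ(x)) dμ(x) = 0. -/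
open MeasureTheory

/-- Ultrametric wavelets whose balls are distinct are orthogonal in `L²(ℚ_p, μ)`. -/
theorem wavelets_orthogonal {p : ℕ} [Fact p.Prime]
    [MeasurableSpace ℚ_[p]] [BorelSpace ℚ_[p]]
    (μ : Measure ℚ_[p]) [μ.IsAddHaarMeasure] (hμ : μ (Metric.closedBall 0 1) = 1)
    (ψ φ : ℚ_[p] → ℂ) (cψ cφ : ℚ_[p]) (γψ γφ : ℤ)
    (hψ : IsWavelet μ ψ cψ γψ) (hφ : IsWavelet μ φ cφ γφ)
    (hne : Metric.closedBall cψ ((p : ℝ) ^ γψ) ≠ Metric.closedBall cφ ((p : ℝ) ^ γφ)) :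
    (∫ x, ψ x * (starRingEnd ℂ) (φ x) ∂μ) = 0 := by
  have hp1 : (1:ℝ) ≤ (p:ℝ) := by
    exact_mod_cast (Fact.out : p.Prime).one_lt.le
  rcases lt_trichotomy γφ γψ with h | h | h
  · -- `γφ < γψ` : `ψ` is constant on the ball of `φ`
    have key : ∀ x, ψ x * (starRingEnd ℂ) (φ x) = ψ cφ * (starRingEnd ℂ) (φ x) := by
      intro x
      by_cases hx : dist x cφ ≤ (p:ℝ) ^ γφ
      · rw [hψ.2.1 x cφ (hx.trans (zpow_le_zpow_right₀ hp1 (by omega)))]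
      · rw [hφ.1 x (lt_of_not_ge hx)]; simp
    calc (∫ x, ψ x * (starRingEnd ℂ) (φ x) ∂μ)
        = ∫ x, ψ cφ * (starRingEnd ℂ) (φ x) ∂μ := by simp_rw [key]
      _ = ψ cφ * ∫ x, (starRingEnd ℂ) (φ x) ∂μ := integral_const_mul _ _
      _ = 0 := by rw [integral_conj, hφ.2.2.1]; simp
  · -- equal radii: the two balls are disjoint
    have hzero : ∀ x, ψ x * (starRingEnd ℂ) (φ x) = 0 := by
      intro x
      by_contra hcon
      have hxψ : dist x cψ ≤ (p:ℝ) ^ γψ := by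
        by_contra hl
        exact hcon (by rw [hψ.1 x (lt_of_not_ge hl)]; simp)
      have hxφ : dist x cφ ≤ (p:ℝ) ^ γφ := by
        by_contra hl
        exact hcon (by rw [hφ.1 x (lt_of_not_ge hl)]; simp)
      apply hne
      have hcc : dist cψ cφ ≤ (p:ℝ) ^ γψ := by
        refine le_trans (IsUltrametricDist.dist_triangle_max cψ x cφ) ?_
        rw [max_le_iff]
        exact ⟨(dist_comm cψ x ▸ hxψ), h ▸ hxφ⟩
      ext w
      simp only [Metric.mem_closedBall]
      constructor
      · intro hw
        rw [h]
        exact le_trans (IsUltrametricDist.dist_triangle_max w cψ cφ)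
          (max_le hw hcc)
      · intro hw
        exact le_trans (IsUltrametricDist.dist_triangle_max w cφ cψ)
          (max_le (h ▸ hw) (dist_comm cψ cφ ▸ hcc))
    simp_rw [hzero]
    simp
  · -- `γψ < γφ` : `φ` is constant on the ball of `ψ`
    have key : ∀ x, ψ x * (starRingEnd ℂ) (φ x) = ψ x * (starRingEnd ℂ) (φ cψ) := by
      intro x
      by_cases hx : dist x cψ ≤ (p:ℝ) ^ γψ
      · rw [hφ.2.1 x cψ (hx.trans (zpow_le_zpow_right₀ hp1 (by omega)))]
      · rw [hψ.1 x (lt_of_not_ge hx)]; simp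
    calc (∫ x, ψ x * (starRingEnd ℂ) (φ x) ∂μ)
        = ∫ x, ψ x * (starRingEnd ℂ) (φ cψ) ∂μ := by simp_rw [key]
      _ = (∫ x, ψ x ∂μ) * (starRingEnd ℂ) (φ cψ) := integral_mul_const _ _
      _ = 0 := by rw [hψ.2.2.1]; simp
end

section
/- The closed linear span in L²(ℚ_p, μ) of the set of all ultrametric wavelets is all of L²(ℚ_p, μ). Equivalently, if f ∈ L²(ℚ_p, μ) satisfies ∫ f(x) · conj(ψ(x)) dμ(x) = 0 for every ultrametric wavelet ψ, then f = 0 almost everywhere. -/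
open MeasureTheory Metric
open scoped ENNReal NNReal

section Lemmas
variable {p : ℕ} [hp : Fact p.Prime]

lemma ultra3 (x y z : ℚ_[p]) : dist x z ≤ max (dist x y) (dist y z) := by
  simpa [dist_eq_norm, sub_add_sub_cancel] using Padic.nonarchimedean (x - y) (y - z)

lemma mem_cb_trans {x y c : ℚ_[p]} {r r' : ℝ} (hr : r' ≤ r) (hxy : dist x y ≤ r')
    (hx : x ∈ closedBall c r) : y ∈ closedBall c r := by
  rw [mem_closedBall] at hx ⊢
  exact (ultra3 y x c).trans (max_le ((dist_comm x y ▸ hxy).trans hr) hx)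

variable [MeasurableSpace ℚ_[p]] [BorelSpace ℚ_[p]]

-- translation invariance
lemma meas_cb_translate (μ : Measure ℚ_[p]) [μ.IsAddLeftInvariant]
    (c : ℚ_[p]) (r : ℝ) : μ (closedBall c r) = μ (closedBall 0 r) := by
  have : closedBall c r = (fun x => -c + x) ⁻¹' closedBall (0:ℚ_[p]) r := by
    ext x
    simp [mem_closedBall, dist_eq_norm, add_comm, sub_eq_neg_add]
  rw [this, measure_preimage_add]

-- partition of a ball into its p maximal subballs
lemma cb_partition (γ : ℤ) :
    closedBall (0:ℚ_[p]) ((p:ℝ)^γ)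
      = ⋃ j ∈ Finset.range p, closedBall ((j:ℚ_[p]) * (p:ℚ_[p])^(-γ)) ((p:ℝ)^(γ-1)) := by
  have hp1 : (1:ℝ) < p := by exact_mod_cast hp.out.one_lt
  have hp0 : (0:ℝ) < p := by positivity
  have hpQ : (p:ℚ_[p]) ≠ 0 := by exact_mod_cast hp.out.ne_zero
  have hnormp : ‖(p:ℚ_[p])‖ = (p:ℝ)⁻¹ := Padic.norm_p
  ext x
  simp only [Set.mem_iUnion, Finset.mem_range, mem_closedBall, dist_eq_norm, exists_prop, sub_zero]
  constructor
  · intro hx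
    -- u = x * p^γ has norm ≤ 1
    set u : ℚ_[p] := x * (p:ℚ_[p])^γ with hu
    have hun : ‖u‖ ≤ 1 := by
      rw [hu, norm_mul, norm_zpow, hnormp]
      calc ‖x‖ * ((p:ℝ)⁻¹)^γ ≤ (p:ℝ)^γ * ((p:ℝ)⁻¹)^γ := by
            apply mul_le_mul_of_nonneg_right hx (by positivity)
        _ = 1 := by rw [← mul_zpow]; simp [mul_inv_cancel₀ hp0.ne']
    set z : ℤ_[p] := ⟨u, hun⟩ with hz
    refine ⟨z.appr 1, by simpa using z.appr_lt 1, ?_⟩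
    have hspec : ‖z - (z.appr 1 : ℤ_[p])‖ ≤ (p:ℝ)^(-(1:ℕ):ℤ) :=
      (PadicInt.norm_le_pow_iff_mem_span_pow _ 1).2 (by simpa using z.appr_spec 1)
    have hspec' : ‖u - ((z.appr 1 : ℕ) : ℚ_[p])‖ ≤ (p:ℝ)⁻¹ := by
      have : ((z - (z.appr 1 : ℤ_[p]) : ℤ_[p]) : ℚ_[p]) = u - ((z.appr 1 : ℕ) : ℚ_[p]) := by
        rw [PadicInt.coe_sub, PadicInt.coe_natCast, hz]
      rw [← this]
      simpa [PadicInt.norm_def] using hspec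
    have : x - ((z.appr 1 : ℕ) : ℚ_[p]) * (p:ℚ_[p])^(-γ)
        = (u - ((z.appr 1 : ℕ) : ℚ_[p])) * (p:ℚ_[p])^(-γ) := by
      rw [hu, zpow_neg]
      have hz0 : ((p:ℚ_[p])^γ) ≠ 0 := zpow_ne_zero _ hpQ
      field_simp
    rw [this, norm_mul, norm_zpow, hnormp]
    calc ‖u - _‖ * ((p:ℝ)⁻¹)^(-γ) ≤ (p:ℝ)⁻¹ * ((p:ℝ)⁻¹)^(-γ) :=
          mul_le_mul_of_nonneg_right hspec' (by positivity)
      _ = (p:ℝ)^(γ-1) := by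
          rw [inv_zpow, ← zpow_neg, neg_neg, ← zpow_neg_one (p:ℝ),
            ← zpow_add₀ hp0.ne']
          ring_nf
  · rintro ⟨j, hj, hxj⟩
    have h1 : ‖((j:ℚ_[p])) * (p:ℚ_[p])^(-γ)‖ ≤ (p:ℝ)^γ := by
      rw [norm_mul, norm_zpow, hnormp]
      have : ‖((j:ℕ):ℚ_[p])‖ ≤ 1 := by exact_mod_cast Padic.norm_int_le_one (j:ℤ)
      calc ‖((j:ℕ):ℚ_[p])‖ * ((p:ℝ)⁻¹)^(-γ) ≤ 1 * ((p:ℝ)⁻¹)^(-γ) :=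
            mul_le_mul_of_nonneg_right this (by positivity)
        _ = (p:ℝ)^γ := by rw [one_mul, inv_zpow, ← zpow_neg, neg_neg]
    have := Padic.nonarchimedean (x - (j:ℚ_[p]) * (p:ℚ_[p])^(-γ)) ((j:ℚ_[p]) * (p:ℚ_[p])^(-γ))
    rw [sub_add_cancel] at this
    refine this.trans (max_le (hxj.trans ?_) h1)
    exact zpow_le_zpow_right₀ hp1.le (by omega)

lemma norm_nat_sub_eq_one {j k : ℕ} (hj : j < p) (hk : k < p) (hne : j ≠ k) :
    ‖((j:ℚ_[p]) - (k:ℚ_[p]))‖ = 1 := by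
  have h1 : ((j:ℚ_[p]) - (k:ℚ_[p])) = (((j:ℤ) - (k:ℤ) : ℤ) : ℚ_[p]) := by push_cast; ring
  rw [h1]
  refine le_antisymm (Padic.norm_int_le_one _) ?_
  by_contra hlt
  push_neg at hlt
  have := (Padic.norm_intCast_lt_one_iff (k := (j:ℤ) - k)).1 hlt
  have habs : ((j:ℤ) - k).natAbs < p := by omega
  have hne' : ((j:ℤ) - k) ≠ 0 := by omega
  have := Int.eq_zero_of_abs_lt_dvd this (by rw [abs_lt]; omega)
  omega

lemma cb_disjoint (γ : ℤ) {j k : ℕ} (hj : j < p) (hk : k < p) (hne : j ≠ k) :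
    Disjoint (closedBall ((j:ℚ_[p]) * (p:ℚ_[p])^(-γ)) ((p:ℝ)^(γ-1)))
      (closedBall ((k:ℚ_[p]) * (p:ℚ_[p])^(-γ)) ((p:ℝ)^(γ-1))) := by
  have hp1 : (1:ℝ) < p := by exact_mod_cast hp.out.one_lt
  have hp0 : (0:ℝ) < p := by positivity
  rw [Set.disjoint_left]
  intro x hx1 hx2
  rw [mem_closedBall, dist_eq_norm] at hx1 hx2
  have hd : ‖(j:ℚ_[p]) * (p:ℚ_[p])^(-γ) - (k:ℚ_[p]) * (p:ℚ_[p])^(-γ)‖ ≤ (p:ℝ)^(γ-1) := by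
    have := Padic.nonarchimedean
      ((j:ℚ_[p]) * (p:ℚ_[p])^(-γ) - x) (x - (k:ℚ_[p]) * (p:ℚ_[p])^(-γ))
    rw [sub_add_sub_cancel] at this
    refine this.trans (max_le ?_ hx2)
    rwa [norm_sub_rev]
  have heq : ‖(j:ℚ_[p]) * (p:ℚ_[p])^(-γ) - (k:ℚ_[p]) * (p:ℚ_[p])^(-γ)‖ = (p:ℝ)^γ := by
    rw [← sub_mul, norm_mul, norm_zpow, Padic.norm_p,
      norm_nat_sub_eq_one hj hk hne, one_mul, inv_zpow, ← zpow_neg, neg_neg]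
  rw [heq] at hd
  have := zpow_lt_zpow_right₀ hp1 (show γ - 1 < γ by omega)
  linarith

lemma meas_cb (μ : Measure ℚ_[p]) [μ.IsAddHaarMeasure]
    (hμ : μ (closedBall (0:ℚ_[p]) 1) = 1) (c : ℚ_[p]) (γ : ℤ) :
    μ (closedBall c ((p:ℝ)^γ)) = ENNReal.ofReal ((p:ℝ)^γ) := by
  have hp1 : (1:ℝ) < p := by exact_mod_cast hp.out.one_lt
  have hp0 : (0:ℝ) < p := by positivity
  rw [meas_cb_translate]
  have key : ∀ δ : ℤ, μ (closedBall (0:ℚ_[p]) ((p:ℝ)^δ))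
      = (p : ℝ≥0∞) * μ (closedBall (0:ℚ_[p]) ((p:ℝ)^(δ-1))) := by
    intro δ
    have hd : Set.Pairwise (↑(Finset.range p) : Set ℕ) fun j k =>
        Disjoint (closedBall ((j:ℚ_[p]) * (p:ℚ_[p])^(-δ)) ((p:ℝ)^(δ-1)))
          (closedBall ((k:ℚ_[p]) * (p:ℚ_[p])^(-δ)) ((p:ℝ)^(δ-1))) := by
      intro j hj k hk hne
      simp only [Finset.coe_range, Set.mem_Iio] at hj hk
      exact cb_disjoint δ hj hk hne
    rw [cb_partition δ, measure_biUnion_finset hd fun j _ => measurableSet_closedBall,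
      Finset.sum_congr rfl (fun j _ => meas_cb_translate μ _ _)]
    simp [Finset.sum_const, nsmul_eq_mul]
  -- now induction
  have base : μ (closedBall (0:ℚ_[p]) ((p:ℝ)^(0:ℤ))) = ENNReal.ofReal ((p:ℝ)^(0:ℤ)) := by
    simpa using hμ
  have hpE0 : (p : ℝ≥0∞) ≠ 0 := by exact_mod_cast hp.out.ne_zero
  have hpET : (p : ℝ≥0∞) ≠ ⊤ := ENNReal.natCast_ne_top p
  have hstep : ∀ δ : ℤ, μ (closedBall (0:ℚ_[p]) ((p:ℝ)^δ)) = ENNReal.ofReal ((p:ℝ)^δ) →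
      μ (closedBall (0:ℚ_[p]) ((p:ℝ)^(δ+1))) = ENNReal.ofReal ((p:ℝ)^(δ+1)) := by
    intro δ h
    rw [key (δ+1)]
    simp only [add_sub_cancel_right, h]
    rw [← ENNReal.ofReal_natCast p, ← ENNReal.ofReal_mul hp0.le, zpow_add₀ hp0.ne', zpow_one]
    ring_nf
  have hstepdown : ∀ δ : ℤ, μ (closedBall (0:ℚ_[p]) ((p:ℝ)^δ)) = ENNReal.ofReal ((p:ℝ)^δ) →
      μ (closedBall (0:ℚ_[p]) ((p:ℝ)^(δ-1))) = ENNReal.ofReal ((p:ℝ)^(δ-1)) := by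
    intro δ h
    have h2 := key δ
    rw [h] at h2
    rw [← ENNReal.mul_right_inj hpE0 hpET, ← h2, ← ENNReal.ofReal_natCast p,
      ← ENNReal.ofReal_mul hp0.le]
    congr 1
    rw [zpow_sub₀ hp0.ne', zpow_one]
    field_simp
  induction γ using Int.induction_on with
  | zero => exact base
  | succ n ih => exact hstep n ih
  | pred n ih => simpa [sub_eq_add_neg] using hstepdown (-n) ih

lemma cb_radius_normalize (x : ℚ_[p]) {r : ℝ} (hr : 0 < r) :
    closedBall x r = closedBall x ((p:ℝ)^(⌊Real.logb p r⌋)) := by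
  have hp1 : (1:ℝ) < p := by exact_mod_cast hp.out.one_lt
  have hle : ∀ k : ℤ, ((p:ℝ)^k ≤ r ↔ k ≤ ⌊Real.logb p r⌋) := by
    intro k
    rw [Int.le_floor, Real.le_logb_iff_rpow_le hp1 hr, Real.rpow_intCast]
  ext y
  simp only [mem_closedBall, dist_eq_norm]
  constructor
  · intro h
    rcases eq_or_ne y x with rfl | hne
    · simp; positivity
    · have h0 : y - x ≠ 0 := sub_ne_zero.2 hne
      rw [Padic.norm_eq_zpow_neg_valuation h0] at h ⊢
      exact zpow_le_zpow_right₀ hp1.le ((hle _).1 h)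
  · intro h
    exact h.trans ((hle _).2 le_rfl)

lemma zpow_floor_logb_le {r : ℝ} (hr : 0 < r) : (p:ℝ)^(⌊Real.logb p r⌋) ≤ r := by
  have hp1 : (1:ℝ) < p := by exact_mod_cast hp.out.one_lt
  rw [← Real.rpow_intCast, ← Real.le_logb_iff_rpow_le hp1 hr]
  exact Int.floor_le _

lemma lt_zpow_floor_logb_succ {r : ℝ} (hr : 0 < r) : r < (p:ℝ)^(⌊Real.logb p r⌋ + 1) := by
  have hp1 : (1:ℝ) < p := by exact_mod_cast hp.out.one_lt
  rw [← Real.rpow_intCast, ← Real.logb_lt_iff_lt_rpow hp1 hr]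
  push_cast
  exact Int.lt_floor_add_one _

lemma unifLocDoubling (μ : Measure ℚ_[p]) [μ.IsAddHaarMeasure]
    (hμ : μ (closedBall (0:ℚ_[p]) 1) = 1) : IsUnifLocDoublingMeasure μ := by
  have hp1 : (1:ℝ) < p := by exact_mod_cast hp.out.one_lt
  have hp0 : (0:ℝ) < p := by positivity
  have hp2 : (2:ℝ) ≤ p := by exact_mod_cast hp.out.two_le
  refine ⟨⟨(p:ℝ≥0)^2, ?_⟩⟩
  filter_upwards [self_mem_nhdsWithin] with ε (hε : ε ∈ Set.Ioi (0:ℝ))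
  intro x
  simp only [Set.mem_Ioi] at hε
  set γ := ⌊Real.logb p ε⌋ with hγ
  have hppow : (0:ℝ) < (p:ℝ)^(γ+1) := by positivity
  have hlt := lt_zpow_floor_logb_succ (p := p) hε
  have h2 : closedBall x (2*ε) ⊆ closedBall x ((p:ℝ)^(γ+2)) := by
    apply closedBall_subset_closedBall
    have he : (p:ℝ)^(γ+(2:ℤ)) = (p:ℝ)^(γ+1) * p := by
      rw [show γ+(2:ℤ) = (γ+1)+1 by ring, zpow_add_one₀ hp0.ne']
    nlinarith
  calc μ (closedBall x (2*ε)) ≤ μ (closedBall x ((p:ℝ)^(γ+2))) := measure_mono h2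
    _ = ENNReal.ofReal ((p:ℝ)^(γ+2)) := meas_cb μ hμ x _
    _ = ((p:ℝ≥0)^2 : ℝ≥0∞) * ENNReal.ofReal ((p:ℝ)^γ) := by
        have he : (p:ℝ)^(γ+(2:ℤ)) = ((p:ℝ)^2) * (p:ℝ)^γ := by
          rw [show γ+(2:ℤ) = (γ+1)+1 by ring, zpow_add_one₀ hp0.ne', zpow_add_one₀ hp0.ne']
          ring
        rw [he, ENNReal.ofReal_mul (by positivity)]
        congr 1
        rw [ENNReal.ofReal_pow hp0.le]
        norm_cast
    _ = ((p:ℝ≥0)^2 : ℝ≥0∞) * μ (closedBall x ((p:ℝ)^γ)) := by rw [meas_cb μ hμ x γ]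
    _ = ((p:ℝ≥0)^2 : ℝ≥0∞) * μ (closedBall x ε) := by rw [← cb_radius_normalize x hε]

end Lemmas




/-- Completeness of the system of ultrametric wavelets in `L²(ℚ_p, μ)`:
if `f ∈ L²(ℚ_p, μ)` is orthogonal to every ultrametric wavelet, then `f = 0` a.e. -/
theorem wavelets_complete {p : ℕ} [Fact p.Prime]
    [MeasurableSpace ℚ_[p]] [BorelSpace ℚ_[p]]
    (μ : Measure ℚ_[p]) [μ.IsAddHaarMeasure] (hμ : μ (Metric.closedBall 0 1) = 1)
    (f : ℚ_[p] → ℂ) (hf : MemLp f 2 μ)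
    (horth : ∀ (ψ : ℚ_[p] → ℂ) (c : ℚ_[p]) (γ : ℤ), IsWavelet μ ψ c γ →
      (∫ x, f x * (starRingEnd ℂ) (ψ x) ∂μ) = 0) :
    f =ᵐ[μ] 0 := by
  classical
  haveI : IsUnifLocDoublingMeasure μ := unifLocDoubling μ hμ
  have hp1 : (1:ℝ) < p := by exact_mod_cast Fact.out (p := p.Prime) |>.one_lt
  have hp0 : (0:ℝ) < p := by positivity
  -- integrability on balls
  have hfin : ∀ (c : ℚ_[p]) (γ : ℤ), μ (Metric.closedBall c ((p:ℝ)^γ)) < ⊤ := by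
    intro c γ
    rw [meas_cb μ hμ]
    exact ENNReal.ofReal_lt_top
  have hint : ∀ (c : ℚ_[p]) (γ : ℤ), IntegrableOn f (Metric.closedBall c ((p:ℝ)^γ)) μ := by
    intro c γ
    haveI : IsFiniteMeasure (μ.restrict (Metric.closedBall c ((p:ℝ)^γ))) :=
      ⟨by rw [Measure.restrict_apply_univ]; exact hfin c γ⟩
    exact (hf.restrict _).integrable one_le_two
  set I : ℚ_[p] → ℤ → ℂ := fun c γ => ∫ x in Metric.closedBall c ((p:ℝ)^γ), f x ∂μ with hI
  -- the basic wavelet and the recursion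
  have hrec : ∀ (c : ℚ_[p]) (γ : ℤ), I c (γ-1) = (p:ℂ)⁻¹ * I c γ := by
    intro c γ
    set B1 := Metric.closedBall c ((p:ℝ)^(γ-1)) with hB1
    set B2 := Metric.closedBall c ((p:ℝ)^γ) with hB2
    have hsub : (p:ℝ)^(γ-1) ≤ (p:ℝ)^γ := zpow_le_zpow_right₀ hp1.le (by omega)
    set ψ : ℚ_[p] → ℂ := fun x =>
      Set.indicator B1 (fun _ => (1:ℂ)) x - (p:ℂ)⁻¹ * Set.indicator B2 (fun _ => (1:ℂ)) x with hψ
    have hmem1 : ∀ {x y : ℚ_[p]}, dist x y ≤ (p:ℝ)^(γ-1) → x ∈ B1 → y ∈ B1 :=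
      fun hxy hx => mem_cb_trans le_rfl hxy hx
    have hmem2 : ∀ {x y : ℚ_[p]}, dist x y ≤ (p:ℝ)^(γ-1) → x ∈ B2 → y ∈ B2 :=
      fun hxy hx => mem_cb_trans hsub hxy hx
    have hiw : IsWavelet μ ψ c γ := by
      refine ⟨?_, ?_, ?_, ?_⟩
      · intro x hx
        have h1 : x ∉ B1 := by
          rw [hB1, Metric.mem_closedBall]
          push_neg
          exact lt_of_le_of_lt hsub hx
        have h2 : x ∉ B2 := by
          rw [hB2, Metric.mem_closedBall]; push_neg; exact hx
        simp [hψ, Set.indicator_of_notMem, h1, h2]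
      · intro x y hxy
        have hyx : dist y x ≤ (p:ℝ)^(γ-1) := by rwa [dist_comm]
        have e1 : (x ∈ B1) = (y ∈ B1) := by
          ext; exact ⟨fun h => hmem1 hxy h, fun h => hmem1 hyx h⟩
        have e2 : (x ∈ B2) = (y ∈ B2) := by
          ext; exact ⟨fun h => hmem2 hxy h, fun h => hmem2 hyx h⟩
        by_cases h1 : x ∈ B1 <;> by_cases h2 : x ∈ B2 <;>
          simp [hψ, Set.indicator, h1, h2, ← e1, ← e2]
      · have hi1 : Integrable (Set.indicator B1 (fun _ => (1:ℂ))) μ := by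
          rw [integrable_indicator_iff measurableSet_closedBall]
          exact integrableOn_const (hfin c (γ-1)).ne
        have hi2 : Integrable (Set.indicator B2 (fun _ => (1:ℂ))) μ := by
          rw [hB2, integrable_indicator_iff measurableSet_closedBall]
          exact integrableOn_const (hfin c γ).ne
        have : (∫ x, ψ x ∂μ) = (∫ x, Set.indicator B1 (fun _ => (1:ℂ)) x ∂μ)
            - (p:ℂ)⁻¹ * (∫ x, Set.indicator B2 (fun _ => (1:ℂ)) x ∂μ) := by
          rw [hψ]
          rw [integral_sub hi1 (hi2.const_mul _), integral_const_mul]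
        rw [this]
        simp only [hB1, hB2]
        rw [integral_indicator_const _ measurableSet_closedBall,
          integral_indicator_const _ measurableSet_closedBall,
          measureReal_def, measureReal_def,
          meas_cb μ hμ, meas_cb μ hμ,
          ENNReal.toReal_ofReal (by positivity), ENNReal.toReal_ofReal (by positivity)]
        simp only [Complex.real_smul, mul_one, Complex.ofReal_zpow]
        have hpc : ((p:ℝ) : ℂ) = (p : ℂ) := by push_cast; ring
        have hpcne : ((p:ℝ) : ℂ) ≠ 0 := by
          rw [hpc]; exact_mod_cast (Fact.out (p := p.Prime)).ne_zero
        rw [zpow_sub₀ hpcne, zpow_one, hpc]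
        ring
      · intro h0
        have hc := congrFun h0 c
        have h1 : c ∈ B1 := Metric.mem_closedBall_self (by positivity)
        have h2 : c ∈ B2 := Metric.mem_closedBall_self (by positivity)
        simp only [hψ, Set.indicator_of_mem h1, Set.indicator_of_mem h2, mul_one,
          Pi.zero_apply] at hc
        have hpne : (p:ℂ) ≠ 1 := by
          exact_mod_cast Nat.Prime.ne_one (Fact.out (p := p.Prime))
        have hpne0 : (p:ℂ) ≠ 0 := by
          exact_mod_cast Nat.Prime.ne_zero (Fact.out (p := p.Prime))
        apply hpne
        field_simp at hc
        linear_combination hc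
    have horth' := horth ψ c γ hiw
    have hconj : ∀ x, f x * (starRingEnd ℂ) (ψ x)
        = Set.indicator B1 f x - (p:ℂ)⁻¹ * Set.indicator B2 f x := by
      intro x
      by_cases h1 : x ∈ B1 <;> by_cases h2 : x ∈ B2 <;>
        simp [hψ, Set.indicator, h1, h2, map_sub, map_mul, map_inv₀, map_one] <;> ring
    rw [integral_congr_ae (Filter.EventuallyEq.of_eq (funext hconj))] at horth'
    have hii1 : Integrable (Set.indicator B1 f) μ := by
      rw [hB1, integrable_indicator_iff measurableSet_closedBall]
      exact hint c (γ-1)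
    have hii2 : Integrable (Set.indicator B2 f) μ := by
      rw [hB2, integrable_indicator_iff measurableSet_closedBall]
      exact hint c γ
    rw [integral_sub hii1 (hii2.const_mul _), integral_const_mul] at horth'
    simp only [hB1, hB2] at horth'
    rw [integral_indicator measurableSet_closedBall,
      integral_indicator measurableSet_closedBall, sub_eq_zero] at horth'
    exact horth'
  -- all ball integrals vanish
  have hzero : ∀ (c : ℚ_[p]) (γ : ℤ), I c γ = 0 := by
    intro c γ
    set A : ℝ := (eLpNorm f 2 μ).toReal with hA
    have hbound : ∀ δ : ℤ, ‖I c δ‖ ≤ A * ((p:ℝ)^δ) ^ ((1:ℝ)/2) := by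
      intro δ
      set ν := μ.restrict (Metric.closedBall c ((p:ℝ)^δ)) with hν
      have h1 : ‖I c δ‖ ≤ (eLpNorm f 1 ν).toReal := by
        rw [eLpNorm_one_eq_lintegral_enorm]
        refine (norm_integral_le_lintegral_norm f).trans (le_of_eq ?_)
        congr 1
        exact lintegral_congr fun x => ofReal_norm_eq_enorm (f x)
      have h2 : eLpNorm f 1 ν ≤ eLpNorm f 2 μ * (ν Set.univ) ^ ((1:ℝ)/2) := by
        have h3 := eLpNorm_le_eLpNorm_mul_rpow_measure_univ (μ := ν) (p := 1) (q := 2)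
          (by norm_num) ((hf.restrict _).aestronglyMeasurable)
        have he : (1 / (1:ℝ≥0∞).toReal - 1 / (2:ℝ≥0∞).toReal) = (1:ℝ)/2 := by norm_num
        rw [he] at h3
        refine h3.trans ?_
        exact mul_le_mul_left (eLpNorm_mono_measure f Measure.restrict_le_self) _
      have hν_univ : ν Set.univ = ENNReal.ofReal ((p:ℝ)^δ) := by
        rw [hν, Measure.restrict_apply_univ, meas_cb μ hμ]
      rw [hν_univ] at h2
      have hfin2 : eLpNorm f 2 μ ≠ ⊤ := hf.2.ne
      calc ‖I c δ‖ ≤ (eLpNorm f 1 ν).toReal := h1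
        _ ≤ (eLpNorm f 2 μ * (ENNReal.ofReal ((p:ℝ)^δ)) ^ ((1:ℝ)/2)).toReal := by
            apply ENNReal.toReal_mono _ h2
            exact ENNReal.mul_ne_top hfin2 (by
              exact ENNReal.rpow_ne_top_of_nonneg (by norm_num) ENNReal.ofReal_ne_top)
        _ = A * ((p:ℝ)^δ) ^ ((1:ℝ)/2) := by
            rw [ENNReal.toReal_mul, ← ENNReal.toReal_rpow, ENNReal.toReal_ofReal (by positivity)]
    have hiter : ∀ n : ℕ, I c γ = ((p:ℂ)⁻¹)^n * I c (γ + n) := by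
      intro n
      induction n with
      | zero => simp
      | succ n ih =>
        have := hrec c (γ + n + 1)
        have he : γ + n + 1 - 1 = γ + n := by ring
        rw [he] at this
        rw [ih, this, show ((γ:ℤ) + (n+1:ℕ)) = γ + n + 1 by push_cast; ring]
        ring
    set t : ℝ := (p:ℝ)⁻¹ * (p:ℝ) ^ ((1:ℝ)/2) with ht
    have ht0 : 0 ≤ t := by positivity
    have ht1 : t < 1 := by
      rw [ht, inv_mul_lt_iff₀ hp0, mul_one]
      nth_rewrite 2 [show (p:ℝ) = (p:ℝ) ^ (1:ℝ) by rw [Real.rpow_one]]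
      exact Real.rpow_lt_rpow_of_exponent_lt hp1 (by norm_num)
    set C : ℝ := A * ((p:ℝ)^γ) ^ ((1:ℝ)/2) with hC
    have hterm : ∀ n : ℕ, ‖I c γ‖ ≤ C * t ^ n := by
      intro n
      rw [hiter n]
      rw [norm_mul, norm_pow, norm_inv]
      have hnp : ‖(p:ℂ)‖ = (p:ℝ) := by
        rw [Complex.norm_natCast]
      rw [hnp]
      calc ((p:ℝ)⁻¹)^n * ‖I c (γ + n)‖ ≤ ((p:ℝ)⁻¹)^n * (A * ((p:ℝ)^(γ + (n:ℤ))) ^ ((1:ℝ)/2)) := by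
            apply mul_le_mul_of_nonneg_left (hbound _) (by positivity)
        _ = C * t ^ n := by
            rw [hC, ht, zpow_add₀ hp0.ne' γ (n:ℤ), Real.mul_rpow (by positivity) (by positivity)]
            rw [show ((p:ℝ)^(n:ℤ)) = (p:ℝ)^(n:ℕ) by norm_cast]
            rw [← Real.rpow_natCast (p:ℝ) n, ← Real.rpow_mul hp0.le,
              mul_comm (n:ℝ) ((1:ℝ)/2), Real.rpow_mul hp0.le, Real.rpow_natCast]
            rw [mul_pow]
            ring
    have htends : Filter.Tendsto (fun n : ℕ => C * t ^ n) Filter.atTop (nhds 0) := by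
      rw [show (0:ℝ) = C * 0 by ring]
      exact (tendsto_pow_atTop_nhds_zero_of_lt_one ht0 ht1).const_mul C
    have : ‖I c γ‖ ≤ 0 := ge_of_tendsto htends (Filter.Eventually.of_forall hterm)
    simpa using le_antisymm this (norm_nonneg _)
  -- Lebesgue differentiation
  have hloc : LocallyIntegrable f μ := hf.locallyIntegrable one_le_two
  filter_upwards [IsUnifLocDoublingMeasure.ae_tendsto_average μ hloc 1] with x hx
  have h1 : Filter.Tendsto (fun r : ℝ => ⨍ y in Metric.closedBall x r, f y ∂μ)
      (nhdsWithin 0 (Set.Ioi 0)) (nhds (f x)) := by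
    refine hx (fun _ => x) id Filter.tendsto_id ?_
    filter_upwards [self_mem_nhdsWithin] with r hr
    simp only [Set.mem_Ioi] at hr
    simp only [id_eq, one_mul]
    exact Metric.mem_closedBall_self hr.le
  have h2 : Filter.Tendsto (fun r : ℝ => ⨍ y in Metric.closedBall x r, f y ∂μ)
      (nhdsWithin 0 (Set.Ioi 0)) (nhds 0) := by
    apply Filter.Tendsto.congr' _ tendsto_const_nhds
    filter_upwards [self_mem_nhdsWithin] with r hr
    simp only [Set.mem_Ioi] at hr
    rw [cb_radius_normalize x hr, setAverage_eq,
      show (∫ y in Metric.closedBall x ((p:ℝ)^(⌊Real.logb p r⌋)), f y ∂μ) = 0 from hzero x _,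
      smul_zero]
  have := tendsto_nhds_unique h1 h2
  simpa using this
end

section
/- Let F and G be summable ball kernels and let ψ be an ultrametric wavelet with ball I. Then v(x, t) = e^{−η_I t} ψ(x) (where η_I is formed from the kernel G) satisfies the quadratic cascade equation for all x ∈ ℚ_p and all t > 0. -/
open MeasureTheory Metric

namespace Cascade
variable {p : ℕ} [hp : Fact p.Prime]

lemma one_lt_p : (1:ℝ) < p := by exact_mod_cast hp.out.one_lt

lemma ppow_pos (γ : ℤ) : (0:ℝ) < (p:ℝ)^γ := zpow_pos (by exact_mod_cast hp.out.pos) _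

lemma ppow_mono : StrictMono fun k : ℤ => (p:ℝ)^k := zpow_right_strictMono₀ one_lt_p

lemma supIdx_norm {x y : ℚ_[p]} (h : x ≠ y) : ‖x - y‖ = (p:ℝ) ^ supIdx x y := by
  rw [supIdx]; exact Padic.norm_eq_zpow_neg_valuation (sub_ne_zero.2 h)

lemma supIdx_eq_of_norm_eq {x y x' y' : ℚ_[p]} (hxy : x ≠ y) (hxy' : x' ≠ y')
    (h : ‖x - y‖ = ‖x' - y'‖) : supIdx x y = supIdx x' y' := by
  apply (ppow_mono (p := p)).injective
  simp only [← supIdx_norm hxy, ← supIdx_norm hxy', h]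

lemma supIdx_le_iff {x y : ℚ_[p]} (h : x ≠ y) {γ : ℤ} :
    supIdx x y ≤ γ ↔ ‖x - y‖ ≤ (p:ℝ)^γ := by
  rw [supIdx_norm h]; exact ppow_mono.le_iff_le.symm

lemma supIdx_comm (x y : ℚ_[p]) : supIdx x y = supIdx y x := by
  rcases eq_or_ne x y with rfl | h
  · rfl
  · exact supIdx_eq_of_norm_eq h h.symm (norm_sub_rev x y)

/-- shell lemma -/
lemma supIdx_eq_of_shell {x y : ℚ_[p]} {γ : ℤ} (h1 : ‖x - y‖ ≤ (p:ℝ)^(γ+1))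
    (h2 : ¬ ‖x - y‖ ≤ (p:ℝ)^γ) : x ≠ y ∧ supIdx x y = γ + 1 := by
  push_neg at h2
  have hne : x ≠ y := by
    rintro rfl; simp only [sub_self, norm_zero] at h2; exact absurd h2 (not_lt.2 (ppow_pos γ).le)
  refine ⟨hne, le_antisymm ((supIdx_le_iff hne).2 h1) ?_⟩
  have := (supIdx_norm hne) ▸ h2
  exact Int.add_one_le_of_lt (ppow_mono.lt_iff_lt.1 this)

/-- ultrametric: if `x` is in the ball of radius `R` around `c` and `ξ` outside,
then `‖ξ - x‖ = ‖ξ - c‖`. -/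
lemma norm_sub_outsider {c x ξ : ℚ_[p]} {R : ℝ} (hx : ‖x - c‖ ≤ R) (hξ : R < ‖ξ - c‖) :
    ‖ξ - x‖ = ‖ξ - c‖ := by
  have hne : ‖ξ - c‖ ≠ ‖c - x‖ := by
    rw [norm_sub_rev c x]; exact ne_of_gt (lt_of_le_of_lt hx hξ)
  have : ξ - x = (ξ - c) + (c - x) := by ring
  rw [this, Padic.add_eq_max_of_ne hne, sup_eq_left.2]
  rw [norm_sub_rev c x]; exact (hx.trans hξ.le)

lemma norm_sub_le_of_mem {c x y : ℚ_[p]} {R : ℝ} (hx : ‖x - c‖ ≤ R) (hy : ‖y - c‖ ≤ R) :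
    ‖x - y‖ ≤ R := by
  have : x - y = (x - c) + (c - y) := by ring
  rw [this]
  refine (Padic.nonarchimedean _ _).trans (sup_le hx ?_)
  rw [norm_sub_rev]; exact hy

variable [MeasurableSpace ℚ_[p]] [BorelSpace ℚ_[p]]
variable (μ : Measure ℚ_[p]) [μ.IsAddHaarMeasure]

lemma measure_closedBall_eq (c : ℚ_[p]) (r : ℝ) :
    μ (closedBall c r) = μ (closedBall 0 r) := by
  have : closedBall c r = (fun x => -c + x) ⁻¹' closedBall (0:ℚ_[p]) r := by
    ext x
    simp only [Set.mem_preimage, mem_closedBall, dist_eq_norm, sub_zero]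
    rw [show -c + x = x - c by ring]
  rw [this, measure_preimage_add]

/-- the ball of radius `p^γ` is the disjoint union of `p` balls of radius `p^(γ-1)`. -/
lemma ball_eq_union (γ : ℤ) :
    closedBall (0:ℚ_[p]) ((p:ℝ)^γ) =
      ⋃ i ∈ Finset.range p, closedBall ((i:ℚ_[p]) * (p:ℚ_[p])^(-γ)) ((p:ℝ)^(γ-1)) := by
  have hp0 : ((p:ℚ_[p]) ≠ 0) := by exact_mod_cast hp.out.ne_zero
  ext z
  simp only [Set.mem_iUnion, mem_closedBall, dist_eq_norm, sub_zero, Finset.mem_range,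
    exists_prop]
  constructor
  · intro hz
    have hw : ‖z * (p:ℚ_[p])^γ‖ ≤ 1 := by
      rw [norm_mul, Padic.norm_p_zpow]
      calc ‖z‖ * (p:ℝ)^(-γ) ≤ (p:ℝ)^γ * (p:ℝ)^(-γ) := by
            exact mul_le_mul_of_nonneg_right hz (ppow_pos _).le
        _ = 1 := by rw [← zpow_add₀ (by exact_mod_cast hp.out.pos.ne' : (p:ℝ) ≠ 0)]; simp
    set W : ℤ_[p] := ⟨z * (p:ℚ_[p])^γ, hw⟩ with hW
    refine ⟨W.appr 1, by simpa using W.appr_lt 1, ?_⟩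
    have hsp := (PadicInt.norm_le_pow_iff_mem_span_pow (W - (W.appr 1 : ℤ_[p])) 1).2
      (PadicInt.appr_spec 1 W)
    rw [PadicInt.norm_def] at hsp
    have hcoe : ((W - (W.appr 1 : ℤ_[p]) : ℤ_[p]) : ℚ_[p]) = z * (p:ℚ_[p])^γ - (W.appr 1 : ℚ_[p]) := by
      rw [PadicInt.coe_sub, PadicInt.coe_natCast]
    rw [hcoe] at hsp
    have : z - (W.appr 1 : ℚ_[p]) * (p:ℚ_[p])^(-γ)
        = (z * (p:ℚ_[p])^γ - (W.appr 1 : ℚ_[p])) * (p:ℚ_[p])^(-γ) := by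
      rw [zpow_neg, sub_mul, mul_inv_cancel_right₀ (zpow_ne_zero γ hp0)]
    rw [this, norm_mul, Padic.norm_p_zpow]
    calc ‖z * (p:ℚ_[p])^γ - (W.appr 1 : ℚ_[p])‖ * (p:ℝ)^(-(-γ))
        ≤ (p:ℝ)^(-(1:ℤ)) * (p:ℝ)^γ := by
          rw [neg_neg]
          apply mul_le_mul_of_nonneg_right _ (ppow_pos _).le
          exact_mod_cast hsp
      _ = (p:ℝ)^(γ-1) := by
          rw [← zpow_add₀ (by exact_mod_cast hp.out.pos.ne' : (p:ℝ) ≠ 0)]; ring_nf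
  · rintro ⟨i, hi, hz⟩
    have h1 : ‖(i:ℚ_[p]) * (p:ℚ_[p])^(-γ)‖ ≤ (p:ℝ)^γ := by
      rw [norm_mul, Padic.norm_p_zpow, neg_neg]
      have : ‖((i:ℤ):ℚ_[p])‖ ≤ 1 := Padic.norm_int_le_one _
      calc ‖(i:ℚ_[p])‖ * (p:ℝ)^γ ≤ 1 * (p:ℝ)^γ := by
            apply mul_le_mul_of_nonneg_right _ (ppow_pos _).le
            exact_mod_cast this
        _ = (p:ℝ)^γ := one_mul _
    calc ‖z‖ = ‖(z - (i:ℚ_[p]) * (p:ℚ_[p])^(-γ)) + (i:ℚ_[p]) * (p:ℚ_[p])^(-γ)‖ := by ring_nf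
      _ ≤ _ := Padic.nonarchimedean _ _
      _ ≤ (p:ℝ)^γ := sup_le (hz.trans (ppow_mono.le_iff_le.2 (by omega))) h1



lemma ball_disjoint (γ : ℤ) :
    (↑(Finset.range p) : Set ℕ).PairwiseDisjoint
      (fun i : ℕ => closedBall ((i:ℚ_[p]) * (p:ℚ_[p])^(-γ)) ((p:ℝ)^(γ-1))) := by
  intro i hi j hj hij
  simp only [Finset.coe_range, Set.mem_Iio] at hi hj
  apply Set.disjoint_left.2
  intro z hzi hzj
  simp only [mem_closedBall, dist_eq_norm] at hzi hzj
  have hp1 : (0:ℤ) < (p:ℤ) := by exact_mod_cast hp.out.pos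
  have hij' : ((i:ℤ) - (j:ℤ)) ≠ 0 := by
    intro h; exact hij (by omega)
  have hd : ¬ ((p:ℤ) ∣ ((i:ℤ) - (j:ℤ))) := by
    rintro ⟨k, hk⟩
    have hb1 : (i:ℤ) - (j:ℤ) < (p:ℤ) := by omega
    have hb2 : -(p:ℤ) < (i:ℤ) - (j:ℤ) := by omega
    rw [hk] at hb1 hb2 hij'
    have h1 : k < 1 := by
      have h : (p:ℤ) * k < (p:ℤ) * 1 := by simpa using hb1
      exact lt_of_mul_lt_mul_left h hp1.le
    have h2 : -1 < k := by
      have h : (p:ℤ) * (-1) < (p:ℤ) * k := by simpa using hb2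
      exact lt_of_mul_lt_mul_left h hp1.le
    have : k = 0 := by omega
    simp [this] at hij'
  have hnorm1 : ‖(((i:ℤ) - (j:ℤ) : ℤ) : ℚ_[p])‖ = 1 := by
    have h1 : ‖(((i:ℤ) - (j:ℤ) : ℤ) : ℚ_[p])‖ ≤ 1 := Padic.norm_int_le_one _
    rcases lt_or_eq_of_le h1 with h2 | h2
    · exact absurd (Padic.norm_intCast_lt_one_iff.1 h2) hd
    · exact h2
  have hkey : ‖(i:ℚ_[p]) * (p:ℚ_[p])^(-γ) - (j:ℚ_[p]) * (p:ℚ_[p])^(-γ)‖ = (p:ℝ)^γ := by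
    have : (i:ℚ_[p]) * (p:ℚ_[p])^(-γ) - (j:ℚ_[p]) * (p:ℚ_[p])^(-γ)
        = (((i:ℤ) - (j:ℤ) : ℤ) : ℚ_[p]) * (p:ℚ_[p])^(-γ) := by push_cast; ring
    rw [this, norm_mul, Padic.norm_p_zpow, hnorm1, one_mul, neg_neg]
  have hcontr : (p:ℝ)^γ ≤ (p:ℝ)^(γ-1) := by
    calc (p:ℝ)^γ = ‖(i:ℚ_[p]) * (p:ℚ_[p])^(-γ) - (j:ℚ_[p]) * (p:ℚ_[p])^(-γ)‖ := hkey.symm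
      _ = ‖((i:ℚ_[p]) * (p:ℚ_[p])^(-γ) - z) + (z - (j:ℚ_[p]) * (p:ℚ_[p])^(-γ))‖ := by ring_nf
      _ ≤ _ := Padic.nonarchimedean _ _
      _ ≤ (p:ℝ)^(γ-1) := sup_le (by rw [norm_sub_rev]; exact hzi) hzj
  exact absurd hcontr (not_le.2 (ppow_mono (by omega)))

/-- `μ(B(0,p^γ)) = p μ(B(0,p^(γ-1)))`. -/
lemma measure_ball_succ (γ : ℤ) :
    μ (closedBall (0:ℚ_[p]) ((p:ℝ)^γ)) = p * μ (closedBall (0:ℚ_[p]) ((p:ℝ)^(γ-1))) := by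
  rw [ball_eq_union γ, measure_biUnion_finset (ball_disjoint γ)
    (fun b _ => measurableSet_closedBall)]
  have : ∀ b ∈ Finset.range p,
      μ (closedBall ((b:ℚ_[p]) * (p:ℚ_[p])^(-γ)) ((p:ℝ)^(γ-1)))
        = μ (closedBall (0:ℚ_[p]) ((p:ℝ)^(γ-1))) := fun b _ => measure_closedBall_eq μ _ _
  rw [Finset.sum_congr rfl this, Finset.sum_const, Finset.card_range, nsmul_eq_mul]

lemma measure_ball_zpow (hμ : μ (closedBall (0:ℚ_[p]) 1) = 1) (c : ℚ_[p]) (γ : ℤ) :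
    μ (closedBall c ((p:ℝ)^γ)) = ENNReal.ofReal ((p:ℝ)^γ) := by
  rw [measure_closedBall_eq μ]
  have hp0 : ((p:ENNReal)) ≠ 0 := by exact_mod_cast hp.out.pos.ne'
  have hpt : ((p:ENNReal)) ≠ ⊤ := ENNReal.natCast_ne_top p
  have key : ∀ γ : ℤ, μ (closedBall (0:ℚ_[p]) ((p:ℝ)^γ)) = ENNReal.ofReal ((p:ℝ)^γ) := by
    have base : μ (closedBall (0:ℚ_[p]) ((p:ℝ)^(0:ℤ))) = ENNReal.ofReal ((p:ℝ)^(0:ℤ)) := by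
      simpa using hμ
    have step : ∀ γ : ℤ, ENNReal.ofReal ((p:ℝ)^γ) = p * ENNReal.ofReal ((p:ℝ)^(γ-1)) := by
      intro γ
      rw [← ENNReal.ofReal_natCast p, ← ENNReal.ofReal_mul (by positivity)]
      congr 1
      rw [show (γ:ℤ) = 1 + (γ-1) by ring, zpow_add₀ (by exact_mod_cast hp.out.pos.ne' : (p:ℝ) ≠ 0) 1 (γ-1)]
      norm_num
  
    intro γ
    induction γ using Int.induction_on with
    | zero => exact base
    | succ n ih =>
        rw [show ((n:ℤ)+1) = ((n+1:ℤ)) by ring, measure_ball_succ μ, show ((n+1:ℤ)-1) = (n:ℤ) by ring,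
          ih, step (n+1), show ((n+1:ℤ)-1) = (n:ℤ) by ring]
    | pred n ih =>
        have h1 := measure_ball_succ μ (-(n:ℤ))
        rw [show (-(n:ℤ)-1) = (-(n+1:ℤ)) by ring] at h1
        rw [ih] at h1
        have h2 := step (-(n:ℤ))
        rw [show (-(n:ℤ)-1) = (-(n+1:ℤ)) by ring] at h2
        rw [h2] at h1
        have h4 := congrArg (fun x => ((p:ENNReal))⁻¹ * x) h1.symm
        simp only [← mul_assoc, ENNReal.inv_mul_cancel hp0 hpt, one_mul] at h4
        convert h4 using 3 <;> push_cast <;> ring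
  exact key γ

lemma measure_singleton_zero (hμ : μ (closedBall (0:ℚ_[p]) 1) = 1) (x : ℚ_[p]) : μ {x} = 0 := by
  have hb : ∀ n : ℕ, μ {x} ≤ ENNReal.ofReal ((p:ℝ)^(-(n:ℤ))) := by
    intro n
    rw [← measure_ball_zpow μ hμ x (-(n:ℤ))]
    exact measure_mono (by simp [mem_closedBall, (ppow_pos (p := p) _).le])
  have htend : Filter.Tendsto (fun n : ℕ => ENNReal.ofReal ((p:ℝ)^(-(n:ℤ))))
      Filter.atTop (nhds 0) := by
    have h1 : Filter.Tendsto (fun n : ℕ => ((p:ℝ)⁻¹)^n) Filter.atTop (nhds 0) :=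
      tendsto_pow_atTop_nhds_zero_of_lt_one (by positivity)
        (inv_lt_one_of_one_lt₀ one_lt_p)
    have h2 := (ENNReal.continuous_ofReal.tendsto 0).comp h1
    simpa [Function.comp_def, zpow_neg, inv_pow] using h2
  have := ge_of_tendsto' htend hb
  exact le_antisymm this bot_le

lemma shell_measure (hμ : μ (closedBall (0:ℚ_[p]) 1) = 1) (c : ℚ_[p]) (γ : ℤ) :
    μ (closedBall c ((p:ℝ)^(γ+1)) \ closedBall c ((p:ℝ)^γ))
      = ENNReal.ofReal ((p:ℝ)^(γ+1) - (p:ℝ)^γ) := by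
  rw [measure_diff (closedBall_subset_closedBall (ppow_mono.le_iff_le.2 (by omega)))
    measurableSet_closedBall.nullMeasurableSet
    (by rw [measure_ball_zpow μ hμ]; exact ENNReal.ofReal_ne_top),
    measure_ball_zpow μ hμ, measure_ball_zpow μ hμ,
    ENNReal.ofReal_sub _ (ppow_pos _).le]

lemma compl_ball_eq_iUnion (c : ℚ_[p]) (γI : ℤ) :
    (closedBall c ((p:ℝ)^γI))ᶜ
      = ⋃ n : ℕ, (closedBall c ((p:ℝ)^(γI+1+(n:ℤ))) \ closedBall c ((p:ℝ)^(γI+(n:ℤ)))) := by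
  ext x
  simp only [Set.mem_compl_iff, mem_closedBall, dist_eq_norm, Set.mem_iUnion, Set.mem_diff,
    not_le]
  constructor
  · intro hx
    have hne : x ≠ c := by
      intro h; rw [h, sub_self, norm_zero] at hx; exact absurd hx (not_lt.2 (ppow_pos _).le)
    have hn : ‖x - c‖ = (p:ℝ)^(supIdx x c) := supIdx_norm hne
    have hgt : γI < supIdx x c := by
      rw [hn] at hx; exact ppow_mono.lt_iff_lt.1 hx
    refine ⟨(supIdx x c - γI - 1).toNat, ?_, ?_⟩
    · rw [hn]
      apply ppow_mono.le_iff_le.2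
      omega
    · rw [hn]
      apply ppow_mono.lt_iff_lt.2
      omega
  · rintro ⟨n, h1, h2⟩
    exact lt_of_le_of_lt (ppow_mono.le_iff_le.2 (by omega)) h2

lemma shells_disjoint (c : ℚ_[p]) (γI : ℤ) :
    Pairwise (Function.onFun Disjoint (fun n : ℕ =>
      closedBall c ((p:ℝ)^(γI+1+(n:ℤ))) \ closedBall c ((p:ℝ)^(γI+(n:ℤ))))) := by
  have key : ∀ m n : ℕ, m < n → Function.onFun Disjoint (fun n : ℕ =>
      closedBall c ((p:ℝ)^(γI+1+(n:ℤ))) \ closedBall c ((p:ℝ)^(γI+(n:ℤ)))) m n := by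
    intro m n hmn
    apply Set.disjoint_left.2
    rintro z ⟨hz1, _⟩ ⟨_, hz4⟩
    exact hz4 ((closedBall_subset_closedBall (ppow_mono.le_iff_le.2
      (show γI+1+(m:ℤ) ≤ γI+(n:ℤ) by omega))) hz1)
  intro m n hmn
  rcases lt_or_gt_of_ne hmn with h | h
  · exact key m n h
  · exact (key n m h).symm

lemma supIdx_mem_shell {c ξ : ℚ_[p]} {γI : ℤ} {n : ℕ}
    (h : ξ ∈ closedBall c ((p:ℝ)^(γI+1+(n:ℤ))) \ closedBall c ((p:ℝ)^(γI+(n:ℤ)))) :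
    supIdx c ξ = γI + 1 + (n:ℤ) := by
  obtain ⟨h1, h2⟩ := h
  rw [mem_closedBall, dist_eq_norm] at h1 h2
  rw [← norm_sub_rev] at h1 h2
  have := supIdx_eq_of_shell (γ := γI + (n:ℤ)) (by rw [show γI+(n:ℤ)+1 = γI+1+(n:ℤ) by ring]; exact h1) h2
  rw [this.2]; ring

lemma integral_compl_ball (hμ : μ (closedBall (0:ℚ_[p]) 1) = 1)
    (T : ℚ_[p] → ℤ → ℂ) (c : ℚ_[p]) (γI : ℤ)
    (hTs : Summable (fun n : ℕ => ‖T c (γI + 1 + (n:ℤ))‖ * ((p:ℝ)^(γI+1+(n:ℤ)) - (p:ℝ)^(γI+(n:ℤ)))))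
    (f : ℚ_[p] → ℂ)
    (hf : ∀ ξ, ξ ∉ closedBall c ((p:ℝ)^γI) → f ξ = T c (supIdx c ξ)) :
    IntegrableOn f (closedBall c ((p:ℝ)^γI))ᶜ μ ∧
      ∫ ξ in (closedBall c ((p:ℝ)^γI))ᶜ, f ξ ∂μ
        = ∑' n : ℕ, T c (γI+1+(n:ℤ)) * (((p:ℝ)^(γI+1+(n:ℤ)) - (p:ℝ)^(γI+(n:ℤ)) : ℝ) : ℂ) := by
  set s : ℕ → Set ℚ_[p] := fun n =>
    closedBall c ((p:ℝ)^(γI+1+(n:ℤ))) \ closedBall c ((p:ℝ)^(γI+(n:ℤ))) with hs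
  have hmeas : ∀ n, MeasurableSet (s n) :=
    fun n => measurableSet_closedBall.diff measurableSet_closedBall
  have hsub : ∀ n, s n ⊆ (closedBall c ((p:ℝ)^γI))ᶜ := by
    rw [compl_ball_eq_iUnion c γI]; exact fun n => Set.subset_iUnion _ n
  have hEq : ∀ n : ℕ, Set.EqOn f (fun _ => T c (γI+1+(n:ℤ))) (s n) := by
    intro n ξ hξ
    rw [hf ξ (fun hmem => hξ.2 (closedBall_subset_closedBall
      (ppow_mono.le_iff_le.2 (by omega)) hmem)), supIdx_mem_shell hξ]
  have hμs : ∀ n : ℕ, μ (s n) = ENNReal.ofReal ((p:ℝ)^(γI+1+(n:ℤ)) - (p:ℝ)^(γI+(n:ℤ))) := by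
    intro n
    have := shell_measure μ hμ c (γI+(n:ℤ))
    rw [show γI+(n:ℤ)+1 = γI+1+(n:ℤ) by ring] at this
    exact this
  have hμsr : ∀ n : ℕ, (μ (s n)).toReal = (p:ℝ)^(γI+1+(n:ℤ)) - (p:ℝ)^(γI+(n:ℤ)) := by
    intro n
    rw [hμs n, ENNReal.toReal_ofReal (sub_nonneg.2 (ppow_mono.le_iff_le.2 (by omega)))]
  have hint : ∀ n : ℕ, IntegrableOn f (s n) μ := by
    intro n
    refine (integrableOn_const ?_).congr_fun (hEq n).symm (hmeas n)
    rw [hμs n]; exact ENNReal.ofReal_ne_top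
  have hnorm : ∀ n : ℕ, ∫ ξ in s n, ‖f ξ‖ ∂μ
      = ‖T c (γI+1+(n:ℤ))‖ * ((p:ℝ)^(γI+1+(n:ℤ)) - (p:ℝ)^(γI+(n:ℤ))) := by
    intro n
    rw [setIntegral_congr_fun (hmeas n) (fun ξ hξ => by rw [hEq n hξ]),
      setIntegral_const, measureReal_def, hμsr n, smul_eq_mul, mul_comm]
  have hsum : Summable (fun n : ℕ => ∫ ξ in s n, ‖f ξ‖ ∂μ) := by
    apply Summable.congr hTs
    intro n; rw [hnorm n]
  have hIntU : IntegrableOn f (⋃ n, s n) μ :=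
    integrableOn_iUnion_of_summable_integral_norm hint hsum
  have hcompl : (closedBall c ((p:ℝ)^γI))ᶜ = ⋃ n, s n := compl_ball_eq_iUnion c γI
  refine ⟨by rw [hcompl]; exact hIntU, ?_⟩
  rw [hcompl, integral_iUnion hmeas (shells_disjoint c γI) hIntU]
  apply tsum_congr
  intro n
  rw [setIntegral_congr_fun (hmeas n) (fun ξ hξ => by rw [hEq n hξ]),
    setIntegral_const, measureReal_def, hμsr n, Complex.real_smul, mul_comm]

namespace Cascade
open Cascade
variable {p : ℕ} [hp : Fact p.Prime]
variable [MeasurableSpace ℚ_[p]] [BorelSpace ℚ_[p]]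
variable {μ : Measure ℚ_[p]} [μ.IsAddHaarMeasure]
variable {ψ : ℚ_[p] → ℂ} {c : ℚ_[p]} {γI : ℤ}

lemma wavelet_zero_outside (hψ : IsWavelet μ ψ c γI) {x : ℚ_[p]}
    (hx : x ∉ closedBall c ((p:ℝ)^γI)) : ψ x = 0 :=
  hψ.1 x (not_le.1 (fun h => hx (mem_closedBall.2 h)))

lemma wavelet_continuous (hψ : IsWavelet μ ψ c γI) : Continuous ψ := by
  apply continuous_iff_continuousAt.2
  intro x
  apply Filter.EventuallyEq.continuousAt (y := ψ x)
  filter_upwards [Metric.closedBall_mem_nhds x (ppow_pos (p := p) (γI - 1))] with y hy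
  exact hψ.2.1 y x (mem_closedBall.1 hy)

lemma wavelet_integrable (hψ : IsWavelet μ ψ c γI) : Integrable ψ μ := by
  apply (wavelet_continuous hψ).integrable_of_hasCompactSupport
  apply HasCompactSupport.of_support_subset_isCompact (isCompact_closedBall c ((p:ℝ)^γI))
  intro x hx
  by_contra hmem
  exact hx (wavelet_zero_outside hψ hmem)

lemma wavelet_setIntegral (hψ : IsWavelet μ ψ c γI) :
    ∫ x in closedBall c ((p:ℝ)^γI), ψ x ∂μ = 0 := by
  rw [setIntegral_eq_integral_of_forall_compl_eq_zero
    (fun x hx => wavelet_zero_outside hψ hx)]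
  exact hψ.2.2.1


lemma mem_norm {c y : ℚ_[p]} {R : ℝ} (h : y ∈ closedBall c R) : ‖y - c‖ ≤ R := by
  rwa [mem_closedBall, dist_eq_norm] at h

lemma not_mem_norm {c y : ℚ_[p]} {R : ℝ} (h : y ∉ closedBall c R) : R < ‖y - c‖ := by
  rw [mem_closedBall, dist_eq_norm, not_le] at h; exact h
  
lemma linear_eigen [BorelSpace ℚ_[p]] (hμ : μ (closedBall (0:ℚ_[p]) 1) = 1)
    (G : ℚ_[p] → ℤ → ℂ) (hG : IsBallKernel G) (hGs : KernelSummable G)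
    (hψ : IsWavelet μ ψ c γI) (x : ℚ_[p]) :
    Integrable (fun ξ => G x (supIdx x ξ) * (ψ x - ψ ξ)) μ ∧
      ∫ ξ, G x (supIdx x ξ) * (ψ x - ψ ξ) ∂μ = lamBall G c γI * ψ x := by
  set I := closedBall c ((p:ℝ)^γI) with hI
  have hμI : μ I = ENNReal.ofReal ((p:ℝ)^γI) := measure_ball_zpow μ hμ c γI
  have hμIr : (μ I).toReal = (p:ℝ)^γI := by
    rw [hμI, ENNReal.toReal_ofReal (ppow_pos _).le]
  have hμIfin : μ I ≠ ⊤ := by rw [hμI]; exact ENNReal.ofReal_ne_top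
  by_cases hx : x ∈ I
  · -- x inside the ball
    have hxc : ‖x - c‖ ≤ (p:ℝ)^γI := mem_norm hx
    set g₁ : ℚ_[p] → ℂ := fun ξ => G c γI * (ψ x - ψ ξ) with hg₁
    set g₂ : ℚ_[p] → ℂ := fun ξ => ψ x * G c (supIdx c ξ) with hg₂
    have hTs : Summable (fun n : ℕ => ‖ψ x * G c (γI + 1 + (n:ℤ))‖ *
        ((p:ℝ)^(γI+1+(n:ℤ)) - (p:ℝ)^(γI+(n:ℤ)))) := by
      apply Summable.congr ((hGs c γI).mul_left ‖ψ x‖)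
      intro n
      rw [norm_mul, mul_assoc]
    have hcompl := integral_compl_ball μ hμ (fun c' γ => ψ x * G c' γ) c γI hTs g₂
      (fun ξ _ => rfl)
    have hpt : ∀ ξ, G x (supIdx x ξ) * (ψ x - ψ ξ)
        = Set.indicator I g₁ ξ + Set.indicator Iᶜ g₂ ξ := by
      intro ξ
      by_cases hξ : ξ ∈ I
      · rw [Set.indicator_of_mem hξ, Set.indicator_of_notMem (by simpa using hξ), add_zero, hg₁]
        by_cases hψeq : ψ x = ψ ξ
        · rw [hψeq]; ring
        · have hd : ¬ ‖x - ξ‖ ≤ (p:ℝ)^(γI-1) := by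
            intro h
            exact hψeq (hψ.2.1 x ξ (by rwa [dist_eq_norm]))
          have h1 : ‖x - ξ‖ ≤ (p:ℝ)^(γI-1+1) := by
            rw [show γI-1+1 = γI by ring]
            exact norm_sub_le_of_mem hxc (mem_norm hξ)
          obtain ⟨hne, hidx⟩ := supIdx_eq_of_shell h1 hd
          rw [hidx, show γI-1+1 = γI by ring, hG x c γI (by rwa [dist_eq_norm])]
      · rw [Set.indicator_of_notMem hξ, Set.indicator_of_mem (by simpa using hξ), zero_add, hg₂]
        have hout : (p:ℝ)^γI < ‖ξ - c‖ := not_mem_norm hξ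
        have hnorm : ‖ξ - x‖ = ‖ξ - c‖ := norm_sub_outsider hxc hout
        have hξx : ξ ≠ x := by
          intro h; rw [h] at hout; rw [h, sub_self, norm_zero] at hnorm
          have := ppow_pos (p := p) γI; linarith
        have hξc : ξ ≠ c := by
          intro h; rw [h, sub_self, norm_zero] at hout
          exact absurd hout (not_lt.2 (ppow_pos _).le)
        have hidx : supIdx x ξ = supIdx c ξ := by
          rw [supIdx_comm x ξ, supIdx_comm c ξ]
          exact supIdx_eq_of_norm_eq hξx hξc hnorm
        have hγle : γI ≤ supIdx c ξ := by
          have hcξ : c ≠ ξ := fun h => hξc h.symm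
          have h2 : (p:ℝ)^γI < (p:ℝ)^(supIdx c ξ) := by
            rw [← supIdx_norm hcξ, norm_sub_rev]; exact hout
          exact (ppow_mono.lt_iff_lt.1 h2).le
        have hGeq : G x (supIdx c ξ) = G c (supIdx c ξ) := by
          apply hG x c _ (by rw [dist_eq_norm]; exact hxc.trans (ppow_mono.le_iff_le.2 hγle))
        rw [hidx, hGeq, wavelet_zero_outside hψ hξ]
        ring
    have hi₁ : Integrable (Set.indicator I g₁) μ := by
      apply IntegrableOn.integrable_indicator _ measurableSet_closedBall
      exact ((integrableOn_const hμIfin).sub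
        ((wavelet_integrable hψ).integrableOn)).const_mul _
    have hi₂ : Integrable (Set.indicator Iᶜ g₂) μ :=
      hcompl.1.integrable_indicator measurableSet_closedBall.compl
    constructor
    · apply (hi₁.add hi₂).congr
      exact Filter.Eventually.of_forall (fun ξ => (hpt ξ).symm)
    · have hrw : (fun ξ => G x (supIdx x ξ) * (ψ x - ψ ξ))
          = fun ξ => Set.indicator I g₁ ξ + Set.indicator Iᶜ g₂ ξ := funext hpt
      rw [hrw, integral_add hi₁ hi₂, integral_indicator measurableSet_closedBall,
        integral_indicator measurableSet_closedBall.compl]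
      have hI1 : ∫ ξ in I, g₁ ξ ∂μ = G c γI * ((((p:ℝ)^γI : ℝ) : ℂ) * ψ x) := by
        rw [hg₁]
        simp only [integral_const_mul]
        rw [integral_sub (integrableOn_const (C := ψ x) hμIfin)
          ((wavelet_integrable hψ).integrableOn), setIntegral_const,
          show (∫ a in I, ψ a ∂μ) = 0 from wavelet_setIntegral hψ,
          sub_zero, measureReal_def, hμIr, Complex.real_smul]
      have hI2 : ∫ ξ in Iᶜ, g₂ ξ ∂μ = ψ x *
          ∑' n : ℕ, G c (γI+1+(n:ℤ)) * (((p:ℝ)^(γI+1+(n:ℤ)) - (p:ℝ)^(γI+(n:ℤ)) : ℝ) : ℂ) := by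
        rw [hcompl.2, ← tsum_mul_left]
        apply tsum_congr; intro n; ring
      rw [hI1, hI2, lamBall]
      ring
  · -- x outside the ball
    have hψx : ψ x = 0 := wavelet_zero_outside hψ hx
    have hout : (p:ℝ)^γI < ‖x - c‖ := not_mem_norm hx
    have hxc : x ≠ c := by
      intro h; rw [h, sub_self, norm_zero] at hout
      exact absurd hout (not_lt.2 (ppow_pos _).le)
    have hpt : ∀ ξ, G x (supIdx x ξ) * (ψ x - ψ ξ) = (-(G x (supIdx x c))) * ψ ξ := by
      intro ξ
      by_cases hξ : ξ ∈ I
      · have hnorm : ‖x - ξ‖ = ‖x - c‖ := norm_sub_outsider (mem_norm hξ) hout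
        have hxξ : x ≠ ξ := by
          intro h; rw [h] at hout; rw [h, sub_self, norm_zero] at hnorm
          have := ppow_pos (p := p) γI; linarith
        rw [supIdx_eq_of_norm_eq hxξ hxc hnorm, hψx]
        ring
      · rw [hψx, wavelet_zero_outside hψ hξ]
        ring
    have hrw : (fun ξ => G x (supIdx x ξ) * (ψ x - ψ ξ))
        = fun ξ => (-(G x (supIdx x c))) * ψ ξ := funext hpt
    constructor
    · rw [hrw]; exact (wavelet_integrable hψ).const_mul _
    · rw [hrw, integral_const_mul, hψ.2.2.1, mul_zero, hψx, mul_zero]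

lemma ae_eq_off_singleton (hμ : μ (closedBall (0:ℚ_[p]) 1) = 1) {f g : ℚ_[p] → ℂ}
    (a : ℚ_[p]) (h : ∀ y, y ≠ a → f y = g y) : f =ᵐ[μ] g := by
  apply (MeasureTheory.ae_iff).2
  apply measure_mono_null _ (measure_singleton_zero μ hμ a)
  intro y hy
  simp only [Set.mem_setOf_eq] at hy
  simp only [Set.mem_singleton_iff]
  by_contra hya
  exact hy (h y hya)

lemma quadratic_zero (hμ : μ (closedBall (0:ℚ_[p]) 1) = 1)
    (F : ℚ_[p] → ℤ → ℂ) (hF : IsBallKernel F) (hFs : KernelSummable F)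
    (hψ : IsWavelet μ ψ c γI) (x : ℚ_[p]) :
    ∫ ξ, ∫ η, F x (sup3Idx x ξ η) * (ψ ξ * (ψ η - ψ x)) ∂μ ∂μ = 0 := by
  set I := closedBall c ((p:ℝ)^γI) with hIdef
  have hμI : μ I = ENNReal.ofReal ((p:ℝ)^γI) := measure_ball_zpow μ hμ c γI
  have hμIr : (μ I).toReal = (p:ℝ)^γI := by
    rw [hμI, ENNReal.toReal_ofReal (ppow_pos _).le]
  have hμIfin : μ I ≠ ⊤ := by rw [hμI]; exact ENNReal.ofReal_ne_top
  by_cases hx : x ∈ I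
  · -- x inside the ball
    have hxc : ‖x - c‖ ≤ (p:ℝ)^γI := mem_norm hx
    set S : ℂ := ∑' n : ℕ, F c (γI+1+(n:ℤ)) *
      (((p:ℝ)^(γI+1+(n:ℤ)) - (p:ℝ)^(γI+(n:ℤ)) : ℝ) : ℂ) with hS
    set K : ℂ := -(ψ x) * (F c γI * (((p:ℝ)^γI : ℝ) : ℂ) + S) with hK
    -- inner integral computation for ξ ∈ I, ξ ≠ x
    have claim_inner : ∀ ξ, ξ ∈ I → ξ ≠ x →
        (∫ η, F x (sup3Idx x ξ η) * (ψ ξ * (ψ η - ψ x)) ∂μ) = ψ ξ * K := by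
      intro ξ hξI hξx
      have hξc : ‖ξ - c‖ ≤ (p:ℝ)^γI := mem_norm hξI
      have hxξ : supIdx x ξ ≤ γI := (supIdx_le_iff (fun h => hξx h.symm)).2
        (norm_sub_le_of_mem hxc hξc)
      set t₁ : ℚ_[p] → ℂ := fun η => F c γI * (ψ ξ * (ψ η - ψ x)) with ht₁
      set t₂ : ℚ_[p] → ℂ := fun η => (ψ ξ * (-(ψ x))) * F c (supIdx c η) with ht₂
      have hTs : Summable (fun n : ℕ => ‖(ψ ξ * (-(ψ x))) * F c (γI + 1 + (n:ℤ))‖ *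
          ((p:ℝ)^(γI+1+(n:ℤ)) - (p:ℝ)^(γI+(n:ℤ)))) := by
        apply Summable.congr ((hFs c γI).mul_left ‖ψ ξ * (-(ψ x))‖)
        intro n; simp only [norm_mul]; ring
      have hcompl := integral_compl_ball μ hμ (fun c' γ => (ψ ξ * (-(ψ x))) * F c' γ)
        c γI hTs t₂ (fun η _ => rfl)
      have hae : (fun η => F x (sup3Idx x ξ η) * (ψ ξ * (ψ η - ψ x)))
          =ᵐ[μ] fun η => Set.indicator I t₁ η + Set.indicator Iᶜ t₂ η := by
        apply ae_eq_off_singleton hμ ξ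
        intro η hηξ
        by_cases hη : η ∈ I
        · rw [Set.indicator_of_mem hη, Set.indicator_of_notMem (by simpa using hη), add_zero]
          show F x (sup3Idx x ξ η) * (ψ ξ * (ψ η - ψ x)) = F c γI * (ψ ξ * (ψ η - ψ x))
          by_cases hψeq : ψ η = ψ x
          · rw [hψeq]; ring
          · have hd : ¬ ‖x - η‖ ≤ (p:ℝ)^(γI-1) := by
              intro h
              exact hψeq (hψ.2.1 x η (by rwa [dist_eq_norm] : dist x η ≤ _)).symm
            have h1 : ‖x - η‖ ≤ (p:ℝ)^(γI-1+1) := by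
              rw [show γI-1+1 = γI by ring]
              exact norm_sub_le_of_mem hxc (mem_norm hη)
            obtain ⟨hne, hidx⟩ := supIdx_eq_of_shell h1 hd
            rw [show γI-1+1 = γI by ring] at hidx
            have hξη : supIdx ξ η ≤ γI := (supIdx_le_iff (fun h => hηξ h.symm)).2
              (norm_sub_le_of_mem hξc (mem_norm hη))
            have h3 : sup3Idx x ξ η = γI := by
              rw [sup3Idx, hidx]; omega
            rw [h3, hF x c γI (by rwa [dist_eq_norm])]
        · rw [Set.indicator_of_notMem hη, Set.indicator_of_mem (by simpa using hη), zero_add]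
          show F x (sup3Idx x ξ η) * (ψ ξ * (ψ η - ψ x)) = (ψ ξ * (-(ψ x))) * F c (supIdx c η)
          have hout : (p:ℝ)^γI < ‖η - c‖ := not_mem_norm hη
          have hnx : ‖η - x‖ = ‖η - c‖ := norm_sub_outsider hxc hout
          have hnξ : ‖η - ξ‖ = ‖η - c‖ := norm_sub_outsider hξc hout
          have hηc : η ≠ c := by
            intro h; rw [h, sub_self, norm_zero] at hout
            exact absurd hout (not_lt.2 (ppow_pos _).le)
          have hηx : η ≠ x := by
            intro h; rw [h] at hout; rw [h, sub_self, norm_zero] at hnx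
            have := ppow_pos (p := p) γI; linarith
          have hi1 : supIdx x η = supIdx c η := by
            rw [supIdx_comm x η, supIdx_comm c η]
            exact supIdx_eq_of_norm_eq hηx hηc hnx
          have hi2 : supIdx ξ η = supIdx c η := by
            rw [supIdx_comm ξ η, supIdx_comm c η]
            exact supIdx_eq_of_norm_eq hηξ hηc hnξ
          have hγle : γI ≤ supIdx c η := by
            have h2 : (p:ℝ)^γI < (p:ℝ)^(supIdx c η) := by
              rw [← supIdx_norm (fun h => hηc h.symm), norm_sub_rev]; exact hout
            exact (ppow_mono.lt_iff_lt.1 h2).le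
          have h3 : sup3Idx x ξ η = supIdx c η := by
            rw [sup3Idx, hi1, hi2]; omega
          rw [h3, hF x c (supIdx c η)
            (by rw [dist_eq_norm]; exact hxc.trans (ppow_mono.le_iff_le.2 hγle)),
            wavelet_zero_outside hψ hη]
          ring
      have hi₁ : Integrable (Set.indicator I t₁) μ := by
        apply IntegrableOn.integrable_indicator _ measurableSet_closedBall
        exact (((wavelet_integrable hψ).integrableOn.sub
          (integrableOn_const hμIfin)).const_mul _).const_mul _
      have hi₂ : Integrable (Set.indicator Iᶜ t₂) μ :=
        hcompl.1.integrable_indicator measurableSet_closedBall.compl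
      rw [integral_congr_ae hae, integral_add hi₁ hi₂,
        integral_indicator measurableSet_closedBall,
        integral_indicator measurableSet_closedBall.compl]
      have hI1 : ∫ η in I, t₁ η ∂μ
          = F c γI * (ψ ξ * ((0 : ℂ) - (((p:ℝ)^γI : ℝ) : ℂ) * ψ x)) := by
        rw [ht₁]
        simp only [integral_const_mul]
        rw [integral_sub ((wavelet_integrable hψ).integrableOn)
          (integrableOn_const (C := ψ x) hμIfin),
          setIntegral_const,
          show (∫ a in I, ψ a ∂μ) = 0 from wavelet_setIntegral hψ,
          measureReal_def, hμIr, Complex.real_smul]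
      have hI2 : ∫ η in Iᶜ, t₂ η ∂μ = (ψ ξ * (-(ψ x))) * S := by
        rw [hcompl.2, hS, ← tsum_mul_left]
        apply tsum_congr; intro n; ring
      rw [hI1, hI2, hK]
      ring
    -- outer integral
    have haeout : (fun ξ => ∫ η, F x (sup3Idx x ξ η) * (ψ ξ * (ψ η - ψ x)) ∂μ)
        =ᵐ[μ] Set.indicator I (fun ξ => ψ ξ * K) := by
      apply ae_eq_off_singleton hμ x
      intro ξ hξx
      by_cases hξ : ξ ∈ I
      · rw [Set.indicator_of_mem hξ]
        exact claim_inner ξ hξ hξx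
      · rw [Set.indicator_of_notMem hξ]
        have : (fun η => F x (sup3Idx x ξ η) * (ψ ξ * (ψ η - ψ x))) = fun _ => (0:ℂ) := by
          funext η
          rw [wavelet_zero_outside hψ hξ]
          ring
        rw [this, integral_zero]
    rw [integral_congr_ae haeout, integral_indicator measurableSet_closedBall]
    have : ∫ ξ in I, ψ ξ * K ∂μ = (∫ ξ in I, ψ ξ ∂μ) * K := by
      rw [← integral_mul_const]
    rw [this, show (∫ a in I, ψ a ∂μ) = 0 from wavelet_setIntegral hψ, zero_mul]
  · -- x outside the ball
    have hψx : ψ x = 0 := wavelet_zero_outside hψ hx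
    have hout : (p:ℝ)^γI < ‖x - c‖ := not_mem_norm hx
    have hxc : x ≠ c := by
      intro h; rw [h, sub_self, norm_zero] at hout
      exact absurd hout (not_lt.2 (ppow_pos _).le)
    have houter : ∀ ξ, (∫ η, F x (sup3Idx x ξ η) * (ψ ξ * (ψ η - ψ x)) ∂μ) = 0 := by
      intro ξ
      by_cases hξ : ξ ∈ I
      · have hξc : ‖ξ - c‖ ≤ (p:ℝ)^γI := mem_norm hξ
        have hnξ : ‖x - ξ‖ = ‖x - c‖ := norm_sub_outsider hξc hout
        have hxξ : x ≠ ξ := by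
          intro h; rw [h] at hout; rw [h, sub_self, norm_zero] at hnξ
          have := ppow_pos (p := p) γI; linarith
        have hiξ : supIdx x ξ = supIdx x c := supIdx_eq_of_norm_eq hxξ hxc hnξ
        have hγlt : γI < supIdx x c := by
          apply (ppow_mono (p := p)).lt_iff_lt.1
          rw [← supIdx_norm hxc]; exact hout
        have hae : (fun η => F x (sup3Idx x ξ η) * (ψ ξ * (ψ η - ψ x)))
            =ᵐ[μ] fun η => (F x (supIdx x c) * ψ ξ) * ψ η := by
          apply ae_eq_off_singleton hμ ξ
          intro η hηξ
          by_cases hη : η ∈ I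
          · have hnη : ‖x - η‖ = ‖x - c‖ := norm_sub_outsider (mem_norm hη) hout
            have hxη : x ≠ η := by
              intro h; rw [h] at hout; rw [h, sub_self, norm_zero] at hnη
              have := ppow_pos (p := p) γI; linarith
            have hiη : supIdx x η = supIdx x c := supIdx_eq_of_norm_eq hxη hxc hnη
            have hξη : supIdx ξ η ≤ γI := (supIdx_le_iff (fun h => hηξ h.symm)).2
              (norm_sub_le_of_mem hξc (mem_norm hη))
            have h3 : sup3Idx x ξ η = supIdx x c := by
              rw [sup3Idx, hiξ, hiη]; omega
            rw [h3, hψx]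
            ring
          · rw [wavelet_zero_outside hψ hη, hψx]
            ring
        rw [integral_congr_ae hae, integral_const_mul, hψ.2.2.1, mul_zero]
      · have : (fun η => F x (sup3Idx x ξ η) * (ψ ξ * (ψ η - ψ x))) = fun _ => (0:ℂ) := by
          funext η
          rw [wavelet_zero_outside hψ hξ]
          ring
        rw [this, integral_zero]
    rw [show (fun ξ => ∫ η, F x (sup3Idx x ξ η) * (ψ ξ * (ψ η - ψ x)) ∂μ) = fun _ => (0:ℂ)
      from funext houter, integral_zero]

end Cascade

end Cascade

/-- For summable ball kernels `F`, `G` and a wavelet `ψ` with ball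
`I = B(c, p^γI)`, the function `v(x,t) = e^(-η_I t) ψ(x)` (with `η_I` formed from `G`)
satisfies the quadratic cascade equation for all `x` and all `t > 0`. -/
theorem single_wavelet_solution {p : ℕ} [Fact p.Prime]
    [MeasurableSpace ℚ_[p]] [BorelSpace ℚ_[p]]
    (μ : Measure ℚ_[p]) [μ.IsAddHaarMeasure] (hμ : μ (Metric.closedBall 0 1) = 1)
    (F G : ℚ_[p] → ℤ → ℂ) (hF : IsBallKernel F) (hG : IsBallKernel G)
    (hFs : KernelSummable F) (hGs : KernelSummable G)
    (ψ : ℚ_[p] → ℂ) (c : ℚ_[p]) (γI : ℤ) (hψ : IsWavelet μ ψ c γI) :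
    SatisfiesCascade μ F G
      (fun x t => Complex.exp (-(lamBall G c γI) * (t : ℂ)) * ψ x) := by
  intro x t ht
  have h1 : HasDerivAt (fun s : ℝ => (s:ℂ)) 1 t := Complex.ofRealCLM.hasDerivAt
  have h2 : HasDerivAt (fun s : ℝ => -(lamBall G c γI) * (s:ℂ)) (-(lamBall G c γI)) t := by
    simpa using h1.const_mul (-(lamBall G c γI))
  have h3 := h2.cexp
  have h4 := h3.mul_const (ψ x)
  set a : ℂ := Complex.exp (-(lamBall G c γI) * (t:ℂ)) with ha
  have hop : cascadeOp μ F G (fun y => a * ψ y) x = a * (lamBall G c γI * ψ x) := by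
    show (∫ ξ, ∫ η, F x (sup3Idx x ξ η) * ((a * ψ ξ) * ((a * ψ η) - (a * ψ x))) ∂μ ∂μ)
        + (∫ ξ, G x (supIdx x ξ) * ((a * ψ x) - (a * ψ ξ)) ∂μ) = a * (lamBall G c γI * ψ x)
    have hq1 : (∫ ξ, ∫ η, F x (sup3Idx x ξ η) * ((a * ψ ξ) * ((a * ψ η) - (a * ψ x))) ∂μ ∂μ)
        = (a*a) * ∫ ξ, ∫ η, F x (sup3Idx x ξ η) * (ψ ξ * (ψ η - ψ x)) ∂μ ∂μ := by
      rw [← integral_const_mul]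
      congr 1; funext ξ
      rw [← integral_const_mul]
      congr 1; funext η
      ring
    have hq2 : (∫ ξ, G x (supIdx x ξ) * ((a * ψ x) - (a * ψ ξ)) ∂μ)
        = a * ∫ ξ, G x (supIdx x ξ) * (ψ x - ψ ξ) ∂μ := by
      rw [← integral_const_mul]
      congr 1; funext ξ
      ring
    rw [hq1, hq2, Cascade.Cascade.quadratic_zero hμ F hF hFs hψ x,
      (Cascade.Cascade.linear_eigen hμ G hG hGs hψ x).2, mul_zero, zero_add]
  have heq : -(cascadeOp μ F G (fun y => a * ψ y) x)
      = Complex.exp (-(lamBall G c γI) * (t:ℂ)) * -(lamBall G c γI) * ψ x := by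
    rw [hop, ha]
    ring
  rw [heq]
  exact h4
end

section
/- Let F be an arbitrary ball kernel (no summability assumption) and let φ, ψ ∈ D_0(ℚ_p). Then for every x, η ∈ ℚ_p the inner integral h_x(η) = ∫ F(sup(x, ξ, η)) φ(ξ)(ψ(η) − ψ(x)) dμ(ξ) converges absolutely, and for every x ∈ ℚ_p the function η ↦ h_x(η) is absolutely integrable over ℚ_p, so that the iterated integral ∫ ( ∫ F(sup(x, ξ, η)) φ(ξ)(ψ(η) − ψ(x)) dμ(ξ) ) dμ(η) converges. -/
open MeasureTheory

set_option maxHeartbeats 1000000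

section Helpers

variable {p : ℕ} [Fact p.Prime]

lemma padic_one_lt : (1:ℝ) < p := Nat.one_lt_cast.mpr (Fact.out : p.Prime).one_lt

lemma padic_pos : (0:ℝ) < p := lt_trans one_pos padic_one_lt

lemma padic_measurable_valuation [MeasurableSpace ℚ_[p]] [BorelSpace ℚ_[p]] :
    Measurable (fun x : ℚ_[p] => x.valuation) := by
  apply measurable_to_countable'
  intro v
  have heq : (fun x : ℚ_[p] => x.valuation) ⁻¹' {v} =
      ((fun x : ℚ_[p] => ‖x‖) ⁻¹' {(p:ℝ) ^ (-v)} \ {0}) ∪ (if v = 0 then {(0:ℚ_[p])} else ∅) := by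
    ext x
    simp only [Set.mem_preimage, Set.mem_singleton_iff, Set.mem_union, Set.mem_diff]
    constructor
    · intro hv
      by_cases hx : x = 0
      · right
        have : v = 0 := by rw [← hv, hx, Padic.valuation_zero]
        simp [this, hx]
      · left
        refine ⟨?_, hx⟩
        rw [Padic.norm_eq_zpow_neg_valuation hx, hv]
    · rintro (⟨h, hx⟩ | h)
      · rw [Padic.norm_eq_zpow_neg_valuation hx] at h
        have := zpow_right_inj₀ (padic_pos (p := p)) (ne_of_gt padic_one_lt).symm.symm |>.mp h
        omega
      · by_cases hv : v = 0
        · simp [hv] at h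
          simp [h, hv, Padic.valuation_zero]
        · simp [hv] at h
  rw [heq]
  apply MeasurableSet.union
  · exact ((measurable_norm (measurableSet_singleton _)).diff (measurableSet_singleton _))
  · split <;> simp

@[simp] lemma supIdx_self (x : ℚ_[p]) : supIdx x x = 0 := by
  simp [supIdx, Padic.valuation_zero]

lemma supIdx_le_of_dist_le {x y : ℚ_[p]} {m : ℤ} (hm : 0 ≤ m)
    (h : dist x y ≤ (p:ℝ)^m) : supIdx x y ≤ m := by
  by_cases hxy : x = y
  · simp [hxy, hm]
  · rw [dist_eq_norm, Padic.norm_eq_zpow_neg_valuation (sub_ne_zero.mpr hxy)] at h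
    exact (zpow_le_zpow_iff_right₀ padic_one_lt).mp h

lemma lt_supIdx_of_lt_dist {x y : ℚ_[p]} {m : ℤ} (h : (p:ℝ)^m < dist x y) :
    m < supIdx x y := by
  have hxy : x ≠ y := by
    intro hxy
    rw [hxy, dist_self] at h
    exact absurd h (not_lt.mpr (le_of_lt (zpow_pos padic_pos m)))
  rw [dist_eq_norm, Padic.norm_eq_zpow_neg_valuation (sub_ne_zero.mpr hxy)] at h
  exact (zpow_lt_zpow_iff_right₀ padic_one_lt).mp h

lemma dist_le_pow_supIdx (x y : ℚ_[p]) : dist x y ≤ (p:ℝ) ^ (max (supIdx x y) 0) := by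
  by_cases hxy : x = y
  · rw [hxy, dist_self]
    positivity
  · rw [dist_eq_norm, Padic.norm_eq_zpow_neg_valuation (sub_ne_zero.mpr hxy)]
    exact (zpow_le_zpow_iff_right₀ padic_one_lt).mpr (le_max_left _ _)

lemma supIdx_eq_of_far {x ξ η : ℚ_[p]} {m : ℤ}
    (hξ : dist x ξ ≤ (p:ℝ)^m) (hη : (p:ℝ)^m < dist x η) :
    supIdx ξ η = supIdx x η := by
  have hab : ξ - η = (ξ - x) + (x - η) := by ring
  have h1 : ‖ξ - x‖ < ‖x - η‖ := by
    rw [← dist_eq_norm, ← dist_eq_norm, dist_comm ξ x]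
    exact lt_of_le_of_lt hξ hη
  have hne : ‖ξ - x‖ ≠ ‖x - η‖ := ne_of_lt h1
  have hkey : ‖ξ - η‖ = ‖x - η‖ := by
    rw [hab, Padic.add_eq_max_of_ne hne, max_eq_right (le_of_lt h1)]
  have hxη : x - η ≠ 0 := by
    intro h0
    rw [← dist_eq_norm] at h1
    simp [h0] at h1
    exact absurd h1 (not_lt.mpr dist_nonneg)
  have hξη : ξ - η ≠ 0 := by
    intro h0
    rw [h0, norm_zero] at hkey
    exact hxη (norm_eq_zero.mp hkey.symm)
  rw [Padic.norm_eq_zpow_neg_valuation hξη, Padic.norm_eq_zpow_neg_valuation hxη] at hkey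
  have := zpow_right_inj₀ (padic_pos (p := p)) (ne_of_gt padic_one_lt).symm.symm |>.mp hkey
  simp only [supIdx]
  omega

lemma continuous_of_lc {f : ℚ_[p] → ℂ}
    (hlc : ∃ γ : ℤ, ∀ x y, dist x y ≤ (p:ℝ)^γ → f x = f y) : Continuous f := by
  obtain ⟨γ, hγ⟩ := hlc
  rw [continuous_iff_continuousAt]
  intro x
  apply Filter.EventuallyEq.continuousAt (y := f x)
  filter_upwards [Metric.closedBall_mem_nhds x (zpow_pos (padic_pos (p := p)) γ)] with y hy
  exact hγ y x (by simpa [Metric.mem_closedBall] using hy)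

lemma exists_norm_bound {f : ℚ_[p] → ℂ} (hf : Continuous f)
    (hsupp : ∃ (c : ℚ_[p]) (γ : ℤ), ∀ x, (p : ℝ) ^ γ < dist x c → f x = 0) :
    ∃ C : ℝ, 0 ≤ C ∧ ∀ x, ‖f x‖ ≤ C := by
  obtain ⟨c, γ, h0⟩ := hsupp
  obtain ⟨C, hC⟩ := (isCompact_closedBall c ((p:ℝ)^γ)).exists_bound_of_continuousOn
    hf.continuousOn
  refine ⟨max C 0, le_max_right _ _, fun x => ?_⟩
  by_cases hx : x ∈ Metric.closedBall c ((p:ℝ)^γ)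
  · exact le_trans (hC x hx) (le_max_left _ _)
  · rw [h0 x (by simpa [Metric.mem_closedBall, not_le] using hx)]
    simp


end Helpers

/-- For an arbitrary ball kernel `F` (no summability assumed) and
`φ, ψ ∈ D_0(ℚ_p)`, the inner integral
`h_x(η) = ∫ F(sup(x,ξ,η)) φ(ξ)(ψ(η) - ψ(x)) dμ(ξ)` converges absolutely for all `x, η`,
and for every `x` the function `η ↦ h_x(η)` is absolutely integrable, so the iterated
integral `∫ (∫ F(sup(x,ξ,η)) φ(ξ)(ψ(η) - ψ(x)) dμ(ξ)) dμ(η)` converges. -/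
theorem iterated_integral_convergent_without_summability {p : ℕ} [Fact p.Prime]
    [MeasurableSpace ℚ_[p]] [BorelSpace ℚ_[p]]
    (μ : Measure ℚ_[p]) [μ.IsAddHaarMeasure] (hμ : μ (Metric.closedBall 0 1) = 1)
    (F : ℚ_[p] → ℤ → ℂ) (hF : IsBallKernel F)
    (φ ψ : ℚ_[p] → ℂ)
    (hφsupp : ∃ (c : ℚ_[p]) (γ : ℤ), ∀ x, (p : ℝ) ^ γ < dist x c → φ x = 0)
    (hφlc : ∃ γ : ℤ, ∀ x y, dist x y ≤ (p : ℝ) ^ γ → φ x = φ y)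
    (hφmean : (∫ x, φ x ∂μ) = 0)
    (hψsupp : ∃ (c : ℚ_[p]) (γ : ℤ), ∀ x, (p : ℝ) ^ γ < dist x c → ψ x = 0)
    (hψlc : ∃ γ : ℤ, ∀ x y, dist x y ≤ (p : ℝ) ^ γ → ψ x = ψ y)
    (hψmean : (∫ x, ψ x ∂μ) = 0) :
    ∀ x : ℚ_[p],
      (∀ η : ℚ_[p],
        Integrable (fun ξ => F x (sup3Idx x ξ η) * (φ ξ * (ψ η - ψ x))) μ) ∧
      Integrable (fun η => ∫ ξ, F x (sup3Idx x ξ η) * (φ ξ * (ψ η - ψ x)) ∂μ) μ := by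
  intro x
  have contφ := continuous_of_lc hφlc
  have contψ := continuous_of_lc hψlc
  obtain ⟨Cφ, hCφ0, hCφ⟩ := exists_norm_bound contφ hφsupp
  obtain ⟨Cψ, hCψ0, hCψ⟩ := exists_norm_bound contψ hψsupp
  obtain ⟨cφ, γφ, hφ0⟩ := hφsupp
  obtain ⟨γψl, hψl⟩ := hψlc
  -- a radius p^M around x containing the support of φ
  obtain ⟨n, hn⟩ := pow_unbounded_of_one_lt (dist x cφ + (p:ℝ)^γφ) (padic_one_lt (p := p))
  set M : ℤ := (n : ℤ) with hMdef
  have hM0 : (0:ℤ) ≤ M := Int.natCast_nonneg n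
  have hpM : dist x cφ + (p:ℝ)^γφ < (p:ℝ)^M := by
    rw [hMdef, zpow_natCast]; exact hn
  have hφsub : ∀ ξ : ℚ_[p], φ ξ ≠ 0 → dist x ξ ≤ (p:ℝ)^M := by
    intro ξ hξ
    have h1 : dist ξ cφ ≤ (p:ℝ)^γφ := by
      by_contra h; exact hξ (hφ0 ξ (not_le.mp h))
    have h2 : dist x ξ ≤ dist x cφ + dist ξ cφ := by
      rw [dist_comm ξ cφ]; exact dist_triangle _ _ _
    linarith
  set s : Set ℚ_[p] := Metric.closedBall x ((p:ℝ)^M) with hsdef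
  have hsmeas : MeasurableSet s := measurableSet_closedBall
  have hsfin : μ s ≠ ⊤ := (isCompact_closedBall x _).measure_lt_top.ne
  -- bounds on sup3Idx
  have h3mem : ∀ ξ η : ℚ_[p], dist x ξ ≤ (p:ℝ)^M →
      supIdx x η ≤ sup3Idx x ξ η ∧ sup3Idx x ξ η ≤ max M (max (supIdx x η) 0) := by
    intro ξ η hξ
    refine ⟨le_max_of_le_right (le_max_left _ _), ?_⟩
    apply max_le
    · exact le_trans (supIdx_le_of_dist_le hM0 hξ) (le_max_left _ _)
    apply max_le
    · exact le_max_of_le_right (le_max_left _ _)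
    · have hK0 : (0:ℤ) ≤ max M (max (supIdx x η) 0) := le_trans hM0 (le_max_left _ _)
      apply supIdx_le_of_dist_le hK0
      have h1 : dist ξ η ≤ max (dist ξ x) (dist x η) := by
        rw [dist_eq_norm, dist_eq_norm, dist_eq_norm,
          show ξ - η = (ξ - x) + (x - η) by ring]
        exact Padic.nonarchimedean _ _
      apply le_trans h1
      apply max_le
      · rw [dist_comm]
        exact le_trans hξ ((zpow_le_zpow_iff_right₀ padic_one_lt).mpr (le_max_left _ _))
      · exact le_trans (dist_le_pow_supIdx x η)
          ((zpow_le_zpow_iff_right₀ padic_one_lt).mpr (le_max_right _ _))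
  -- joint measurability
  have hjm : Measurable (fun q : ℚ_[p] × ℚ_[p] =>
      F x (sup3Idx x q.2 q.1) * (φ q.2 * (ψ q.1 - ψ x))) := by
    have h1 : Measurable (fun q : ℚ_[p] × ℚ_[p] => supIdx x q.2) :=
      (padic_measurable_valuation.comp (measurable_const.sub measurable_snd)).neg
    have h2 : Measurable (fun q : ℚ_[p] × ℚ_[p] => supIdx x q.1) :=
      (padic_measurable_valuation.comp (measurable_const.sub measurable_fst)).neg
    have h3 : Measurable (fun q : ℚ_[p] × ℚ_[p] => supIdx q.2 q.1) :=
      (padic_measurable_valuation.comp (measurable_snd.sub measurable_fst)).neg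
    have hmsup : Measurable (fun q : ℚ_[p] × ℚ_[p] => sup3Idx x q.2 q.1) :=
      h1.max (h2.max h3)
    exact ((measurable_from_top (f := F x)).comp hmsup).mul
      ((contφ.comp continuous_snd).measurable.mul
        (((contψ.comp continuous_fst).measurable).sub measurable_const))
  -- vanishing of the integrand off s
  have hzero : ∀ (η ξ : ℚ_[p]), ξ ∉ s → F x (sup3Idx x ξ η) * (φ ξ * (ψ η - ψ x)) = 0 := by
    intro η ξ hξ
    have hφξ : φ ξ = 0 := by
      by_contra h
      exact hξ (by simpa [hsdef, Metric.mem_closedBall, dist_comm] using hφsub ξ h)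
    simp [hφξ]
  -- Part 1 : inner integrability
  have hinner : ∀ η, Integrable (fun ξ => F x (sup3Idx x ξ η) * (φ ξ * (ψ η - ψ x))) μ := by
    intro η
    have hgmeas : Measurable (fun ξ => F x (sup3Idx x ξ η) * (φ ξ * (ψ η - ψ x))) := by
      have h1 : Measurable (fun ξ : ℚ_[p] => supIdx x ξ) :=
        (padic_measurable_valuation.comp (measurable_const.sub measurable_id)).neg
      have h3 : Measurable (fun ξ : ℚ_[p] => supIdx ξ η) :=
        (padic_measurable_valuation.comp (measurable_id.sub measurable_const)).neg
      have hmsup : Measurable (fun ξ : ℚ_[p] => sup3Idx x ξ η) :=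
        h1.max (measurable_const.max h3)
      exact ((measurable_from_top (f := F x)).comp hmsup).mul
        (contφ.measurable.mul measurable_const)
    have hlohi : supIdx x η ≤ max M (max (supIdx x η) 0) :=
      le_max_of_le_right (le_max_of_le_left (le_refl _))
    have hne : (Finset.Icc (supIdx x η) (max M (max (supIdx x η) 0))).Nonempty :=
      Finset.nonempty_Icc.mpr hlohi
    set CF := (Finset.Icc (supIdx x η) (max M (max (supIdx x η) 0))).sup' hne
      (fun γ => ‖F x γ‖) with hCFdef
    have hgbd : ∀ ξ ∈ s, ‖F x (sup3Idx x ξ η) * (φ ξ * (ψ η - ψ x))‖ ≤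
        CF * (Cφ * (Cψ + Cψ)) := by
      intro ξ hξs
      have hξ : dist x ξ ≤ (p:ℝ)^M := by
        rwa [hsdef, Metric.mem_closedBall, dist_comm] at hξs
      obtain ⟨hl, hr⟩ := h3mem ξ η hξ
      have hFb : ‖F x (sup3Idx x ξ η)‖ ≤ CF := by
        rw [hCFdef]
        exact Finset.le_sup' (fun γ => ‖F x γ‖) (Finset.mem_Icc.mpr ⟨hl, hr⟩)
      have hψb : ‖ψ η - ψ x‖ ≤ Cψ + Cψ :=
        le_trans (norm_sub_le _ _) (add_le_add (hCψ η) (hCψ x))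
      rw [norm_mul, norm_mul]
      apply mul_le_mul hFb _ (by positivity) (le_trans (norm_nonneg _) hFb)
      exact mul_le_mul (hCφ ξ) hψb (norm_nonneg _) hCφ0
    have hind : (fun ξ => F x (sup3Idx x ξ η) * (φ ξ * (ψ η - ψ x))) =
        s.indicator (fun ξ => F x (sup3Idx x ξ η) * (φ ξ * (ψ η - ψ x))) := by
      ext ξ
      by_cases hξ : ξ ∈ s
      · rw [Set.indicator_of_mem hξ]
      · rw [Set.indicator_of_notMem hξ, hzero η ξ hξ]
    rw [hind, integrable_indicator_iff hsmeas]
    exact Measure.integrableOn_of_bounded hsfin hgmeas.aestronglyMeasurable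
      ((ae_restrict_iff' hsmeas).mpr (ae_of_all _ hgbd))
  refine ⟨hinner, ?_⟩
  -- Part 2 : outer integrability
  set H := fun η => ∫ ξ, F x (sup3Idx x ξ η) * (φ ξ * (ψ η - ψ x)) ∂μ with hHdef
  have hHmeas : AEStronglyMeasurable H μ :=
    (hjm.stronglyMeasurable.integral_prod_right' (ν := μ)).aestronglyMeasurable
  have hHzero_far : ∀ η, (p:ℝ)^M < dist x η → H η = 0 := by
    intro η hη
    have hcongr : ∀ ξ, F x (sup3Idx x ξ η) * (φ ξ * (ψ η - ψ x)) =
        (F x (supIdx x η) * (ψ η - ψ x)) • φ ξ := by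
      intro ξ
      by_cases hφξ : φ ξ = 0
      · simp [hφξ]
      · have hξ := hφsub ξ hφξ
        have ha : supIdx x ξ ≤ M := supIdx_le_of_dist_le hM0 hξ
        have hb : M < supIdx x η := lt_supIdx_of_lt_dist hη
        have hc : supIdx ξ η = supIdx x η := supIdx_eq_of_far hξ hη
        have h1 : sup3Idx x ξ η = supIdx x η := by
          simp only [sup3Idx, hc, max_self]
          exact max_eq_right (le_of_lt (lt_of_le_of_lt ha hb))
        rw [h1, smul_eq_mul]; ring
    rw [hHdef]
    simp only [hcongr]
    rw [integral_smul, hφmean, smul_zero]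
  have hHzero_near : ∀ η, dist x η ≤ (p:ℝ)^γψl → H η = 0 := by
    intro η hη
    have h1 : ψ η = ψ x := hψl η x (by rwa [dist_comm])
    simp [hHdef, h1]
  set lo₀ : ℤ := min (γψl + 1) 0 with hlo₀
  set hi₀ : ℤ := max M 0 with hhi₀
  have hne₀ : (Finset.Icc lo₀ hi₀).Nonempty :=
    Finset.nonempty_Icc.mpr (le_trans (min_le_right _ _) (le_max_right _ _))
  set CF₀ := (Finset.Icc lo₀ hi₀).sup' hne₀ (fun γ => ‖F x γ‖) with hCF₀def
  have hCF₀ : 0 ≤ CF₀ := by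
    refine le_trans (norm_nonneg (F x lo₀)) ?_
    rw [hCF₀def]
    exact Finset.le_sup' (fun γ => ‖F x γ‖) (Finset.mem_Icc.mpr
      ⟨le_refl _, le_trans (min_le_right _ _) (le_max_right _ _)⟩)
  have hC₀ : 0 ≤ CF₀ * (Cφ * (Cψ + Cψ)) * (μ s).toReal := by positivity
  have hHbd : ∀ η, ‖H η‖ ≤ CF₀ * (Cφ * (Cψ + Cψ)) * (μ s).toReal := by
    intro η
    by_cases h1 : dist x η ≤ (p:ℝ)^γψl
    · rw [hHzero_near η h1, norm_zero]; exact hC₀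
    by_cases h2 : (p:ℝ)^M < dist x η
    · rw [hHzero_far η h2, norm_zero]; exact hC₀
    push_neg at h1 h2
    have hsup_lo : γψl + 1 ≤ supIdx x η := lt_supIdx_of_lt_dist h1
    have hsup_hi : supIdx x η ≤ M := supIdx_le_of_dist_le hM0 h2
    have hbd : ∀ ξ ∈ s, ‖F x (sup3Idx x ξ η) * (φ ξ * (ψ η - ψ x))‖ ≤
        CF₀ * (Cφ * (Cψ + Cψ)) := by
      intro ξ hξs
      have hξ : dist x ξ ≤ (p:ℝ)^M := by
        rwa [hsdef, Metric.mem_closedBall, dist_comm] at hξs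
      obtain ⟨hl, hr⟩ := h3mem ξ η hξ
      have hmem : sup3Idx x ξ η ∈ Finset.Icc lo₀ hi₀ := by
        rw [Finset.mem_Icc, hlo₀, hhi₀]
        constructor
        · exact le_trans (le_trans (min_le_left _ _) hsup_lo) hl
        · refine le_trans hr (max_le (le_max_left _ _) (max_le ?_ (le_max_right _ _)))
          exact le_trans hsup_hi (le_max_left _ _)
      have hFb : ‖F x (sup3Idx x ξ η)‖ ≤ CF₀ := by
        rw [hCF₀def]
        exact Finset.le_sup' (fun γ => ‖F x γ‖) hmem
      have hψb : ‖ψ η - ψ x‖ ≤ Cψ + Cψ :=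
        le_trans (norm_sub_le _ _) (add_le_add (hCψ η) (hCψ x))
      rw [norm_mul, norm_mul]
      apply mul_le_mul hFb _ (by positivity) hCF₀
      exact mul_le_mul (hCφ ξ) hψb (norm_nonneg _) hCφ0
    have heq : H η = ∫ ξ in s, F x (sup3Idx x ξ η) * (φ ξ * (ψ η - ψ x)) ∂μ :=
      (setIntegral_eq_integral_of_forall_compl_eq_zero (hzero η)).symm
    rw [heq]
    exact norm_setIntegral_le_of_norm_le_const (lt_top_iff_ne_top.mpr hsfin) hbd
  have hHind : H = s.indicator H := by
    ext η
    by_cases hη : η ∈ s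
    · rw [Set.indicator_of_mem hη]
    · rw [Set.indicator_of_notMem hη]
      apply hHzero_far
      rw [hsdef, Metric.mem_closedBall, not_le, dist_comm] at hη
      exact hη
  rw [hHdef] at hHind
  rw [hHdef, hHind, integrable_indicator_iff hsmeas]
  exact Measure.integrableOn_of_bounded (M := CF₀ * (Cφ * (Cψ + Cψ)) * (μ s).toReal)
    hsfin hHmeas ((ae_restrict_iff' hsmeas).mpr (ae_of_all _ fun η _ => hHbd η))
end
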